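/- arXiv:1805.01694 — 9 statements merged into one kernel-verified Lean document; each statement's English description precedes it below -/
import Mathlib

section
/- Let N be a nonempty proper subset of ℂ and let T be a linear operator on a complex Hilbert space H with numerical range contained in N. If λ ∉ N and the range of T − λI equals H, then T is densely defined: any η ∈ H orthogonal to D(T) is zero. -/
open scoped InnerProductSpace ComplexInnerProductSpace

/-- The numerical range of a (possibly unbounded) linear operator on a complex Hilbert space. -/
def numRange {H : Type*} [NormedAddCommGroup H] [InnerProductSpace ℂ H]
    (T : H →ₗ.[ℂ] H) : Set ℂ :=
  {z | ∃ ξ : T.domain, ‖(ξ : H)‖ = 1 ∧ ⟪(ξ : H), T ξ⟫_ℂ = z}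

/-- if `W(T) ⊆ N ≠ ℂ`, `λ ∉ N`, and `R(T - λI) = H`, then `T` is densely
defined: every `η` orthogonal to `D(T)` is zero. -/
theorem densely_defined_of_surjective {H : Type*} [NormedAddCommGroup H]
    [InnerProductSpace ℂ H] [CompleteSpace H] (N : Set ℂ) (hNne : N.Nonempty)
    (hN : N ≠ Set.univ) (T : H →ₗ.[ℂ] H) (hW : numRange T ⊆ N) (l : ℂ) (hl : l ∉ N)
    (hsurj : ∀ η : H, ∃ ξ : T.domain, T ξ - l • (ξ : H) = η) :
    ∀ η : H, (∀ ξ : T.domain, ⟪(ξ : H), η⟫_ℂ = 0) → η = 0 := by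
  intro η hη
  obtain ⟨ξ, hξ⟩ := hsurj η
  have hzero : (ξ : H) = 0 := by
    by_contra hne
    have hnorm : ‖(ξ : H)‖ ≠ 0 := norm_ne_zero_iff.mpr hne
    -- inner product computation: ⟪ξ, Tξ⟫ = l ‖ξ‖²
    have h1 : ⟪(ξ : H), T ξ⟫_ℂ = l * (‖(ξ : H)‖ : ℂ)^2 := by
      have := hη ξ
      rw [← hξ] at this
      rw [inner_sub_right, inner_smul_right, inner_self_eq_norm_sq_to_K] at this
      have := sub_eq_zero.mp this
      exact this
    -- normalized vector
    set c : ℂ := (‖(ξ : H)‖ : ℂ)⁻¹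
    have hc : c ≠ 0 := by
      simp [c, hnorm]
    have hmem : l ∈ numRange T := by
      refine ⟨c • ξ, ?_, ?_⟩
      · have : ((c • ξ : T.domain) : H) = c • (ξ : H) := rfl
        rw [this, norm_smul]
        simp [c, norm_inv, hnorm]
      · have hval : T (c • ξ) = c • T ξ := map_smul T.toFun c ξ
        have hcoe : ((c • ξ : T.domain) : H) = c • (ξ : H) := rfl
        rw [hval, hcoe, inner_smul_left, inner_smul_right, h1]
        have hcconj : (starRingEnd ℂ) c = c := by
          simp [c, ← Complex.ofReal_inv]
        rw [hcconj]
        have hx : (‖(ξ : H)‖ : ℂ) ≠ 0 := by exact_mod_cast hnorm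
        field_simp [c]
        have hcx : c * (‖(ξ : H)‖ : ℂ) = 1 := inv_mul_cancel₀ hx
        rw [show c ^ 2 * l * (‖(ξ : H)‖ : ℂ) ^ 2 = l * (c * (‖(ξ : H)‖ : ℂ)) ^ 2 by ring, hcx]; ring
    exact hl (hW hmem)
  have hξ0 : ξ = 0 := Subtype.ext hzero
  rw [hξ0] at hξ
  simp at hξ
  exact hξ.symm
end

section
/- Let N be a nonempty proper convex subset of ℂ and T a linear operator with numerical range in N. If λ ∉ N and R(T − λI) = H, then T is N-maximal: every linear operator T' extending T with numerical range contained in N equals T. -/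
open scoped InnerProductSpace ComplexInnerProductSpace

/-- if `N` is a nonempty proper convex subset of `ℂ`, `W(T) ⊆ N`, `λ ∉ N` and
`R(T - λI) = H`, then `T` is `N`-maximal: every extension `T'` of `T` with `W(T') ⊆ N`
equals `T`. -/
theorem nMaximal_of_surjective {H : Type*} [NormedAddCommGroup H]
    [InnerProductSpace ℂ H] [CompleteSpace H] (N : Set ℂ) (hNne : N.Nonempty)
    (hNproper : N ≠ Set.univ) (hNconv : Convex ℝ N)
    (T : H →ₗ.[ℂ] H) (hW : numRange T ⊆ N) (l : ℂ) (hl : l ∉ N)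
    (hsurj : ∀ η : H, ∃ ξ : T.domain, T ξ - l • (ξ : H) = η) :
    ∀ T' : H →ₗ.[ℂ] H, T ≤ T' → numRange T' ⊆ N → T' = T := by
  intro T' hle hW'
  have hdom : T'.domain ≤ T.domain := by
    intro x hx
    obtain ⟨ξ, hξ⟩ := hsurj (T' ⟨x, hx⟩ - l • x)
    set ξ' : T'.domain := ⟨(ξ : H), hle.1 ξ.2⟩ with hξ'def
    have hTξ : T' ξ' = T ξ := (hle.2 rfl).symm
    set η : T'.domain := ⟨x, hx⟩ - ξ' with hηdef
    have hηcoe : (η : H) = x - (ξ : H) := rfl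
    have hTη : T' η = l • (η : H) := by
      rw [hηdef, T'.map_sub, hTξ, hηcoe, smul_sub]
      linear_combination (norm := module) -hξ
    have hη0 : (η : H) = 0 := by
      by_contra hne
      have hnorm : ‖(η : H)‖ ≠ 0 := norm_ne_zero_iff.mpr hne
      set c : ℂ := (((‖(η : H)‖)⁻¹ : ℝ) : ℂ) with hc
      set u : T'.domain := c • η with hu
      have hucoe : (u : H) = c • (η : H) := rfl
      have hunorm : ‖(u : H)‖ = 1 := by
        rw [hucoe, norm_smul, hc]
        simp [hnorm]
      have hinner : ⟪(u : H), T' u⟫_ℂ = l := by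
        rw [hu, T'.map_smul, hucoe, inner_smul_left, inner_smul_right, hTη,
          inner_smul_right, inner_self_eq_norm_sq_to_K]
        rw [hc]
        have : (starRingEnd ℂ) ((((‖(η : H)‖)⁻¹ : ℝ) : ℂ)) = (((‖(η : H)‖)⁻¹ : ℝ) : ℂ) := by
          simp
        rw [this]
        have h2 : ((‖(η : H)‖ : ℂ)) ≠ 0 := by
          exact_mod_cast hnorm
        push_cast
        field_simp
        exact mul_comm _ _
      exact hl (hW' ⟨u, hunorm, hinner⟩)
    have : x = (ξ : H) := by rwa [hηcoe, sub_eq_zero] at hη0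
    rw [this]; exact ξ.2
  have hle' : T' ≤ T := ⟨hdom, fun p q h => (hle.2 h.symm).symm⟩
  exact le_antisymm hle' hle
end

section
/- Let T be a densely defined linear operator on a complex Hilbert space whose numerical range is contained in a horizontal strip {λ ∈ ℂ : |Im λ| ≤ α} for some α ≥ 0. Then there exist a symmetric operator S with D(S) = D(T) and a bounded self-adjoint operator B ∈ B(H) with ‖B‖ ≤ α such that T = S + iB. Moreover D(T) ⊆ D(T*), S = ½(T + T*) on D(T), and B restricted to D(T) equals (1/(2i))(T − T*). -/
open scoped InnerProductSpace ComplexInnerProductSpace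

namespace StripAux

open Complex

variable {H : Type*} [NormedAddCommGroup H] [InnerProductSpace ℂ H]

/-- The imaginary-part sesquilinear form of `T`. -/
noncomputable def bb (T : H →ₗ.[ℂ] H) (ξ η : T.domain) : ℂ :=
  (2 * Complex.I)⁻¹ * (⟪(ξ : H), (T η : H)⟫_ℂ - ⟪(T ξ : H), (η : H)⟫_ℂ)

variable (T : H →ₗ.[ℂ] H)

lemma bb_conj (ξ η : T.domain) : (starRingEnd ℂ) (bb T ξ η) = bb T η ξ := by
  simp only [bb, map_mul, map_sub, map_inv₀, map_ofNat, Complex.conj_I, inner_conj_symm]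
  have h : (2 * Complex.I) ≠ 0 := mul_ne_zero two_ne_zero Complex.I_ne_zero
  field_simp
  ring

lemma bb_add_right (ξ η η' : T.domain) :
    bb T ξ (η + η') = bb T ξ η + bb T ξ η' := by
  simp only [bb, T.map_add, Submodule.coe_add, inner_add_left, inner_add_right]
  ring

lemma bb_smul_right (c : ℂ) (ξ η : T.domain) :
    bb T ξ (c • η) = c * bb T ξ η := by
  simp only [bb, T.map_smul, Submodule.coe_smul_of_tower, inner_smul_right]
  ring

lemma bb_smul_left (c : ℂ) (ξ η : T.domain) :
    bb T (c • ξ) η = (starRingEnd ℂ) c * bb T ξ η := by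
  simp only [bb, T.map_smul, Submodule.coe_smul_of_tower, inner_smul_left]
  ring

lemma bb_self (ξ : T.domain) :
    bb T ξ ξ = ((⟪(ξ : H), (T ξ : H)⟫_ℂ).im : ℂ) := by
  rw [bb, ← inner_conj_symm ((T ξ : H)) ((ξ : H)), Complex.sub_conj]
  have h : (2 * Complex.I) ≠ 0 := mul_ne_zero two_ne_zero Complex.I_ne_zero
  field_simp
  push_cast
  ring

lemma bb_expand_add (ξ η : T.domain) :
    bb T (ξ + η) (ξ + η) = bb T ξ ξ + bb T ξ η + bb T η ξ + bb T η η := by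
  simp only [bb, T.map_add, Submodule.coe_add, inner_add_left, inner_add_right]
  ring

lemma bb_expand_sub (ξ η : T.domain) :
    bb T (ξ - η) (ξ - η) = bb T ξ ξ - bb T ξ η - bb T η ξ + bb T η η := by
  simp only [bb, T.map_sub, Submodule.coe_sub, inner_sub_left, inner_sub_right]
  ring

variable {T}

/-- Diagonal bound from the numerical range hypothesis. -/
lemma bb_self_abs_le {α : ℝ} (hα : 0 ≤ α)
    (hW : numRange T ⊆ {z : ℂ | |z.im| ≤ α}) (ξ : T.domain) :
    ‖(bb T ξ ξ)‖ ≤ α * (‖(ξ : H)‖ * ‖(ξ : H)‖) := by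
  rcases eq_or_ne (ξ : H) 0 with h0 | h0
  · have hz : ξ = 0 := Subtype.ext h0
    subst hz
    simp [bb]
  · set r : ℝ := ‖(ξ : H)‖ with hr
    have hrpos : 0 < r := norm_pos_iff.mpr h0
    set u : T.domain := ((r⁻¹ : ℝ) : ℂ) • ξ with hu
    have hnorm : ‖(u : H)‖ = 1 := by
      rw [hu]
      simp only [Submodule.coe_smul_of_tower, norm_smul]
      rw [Complex.norm_real, Real.norm_eq_abs, abs_of_pos (inv_pos.mpr hrpos)]
      field_simp
      exact hr.symm
    have hmem : (⟪(u : H), (T u : H)⟫_ℂ) ∈ numRange T := ⟨u, hnorm, rfl⟩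
    have him : |(⟪(u : H), (T u : H)⟫_ℂ).im| ≤ α := hW hmem
    have hinner : ⟪(u : H), (T u : H)⟫_ℂ = ((r⁻¹ : ℝ) : ℂ) * ((r⁻¹ : ℝ) : ℂ)
        * ⟪(ξ : H), (T ξ : H)⟫_ℂ := by
      rw [hu, T.map_smul]
      simp only [Submodule.coe_smul_of_tower, inner_smul_left, inner_smul_right,
        Complex.conj_ofReal]
      ring
    have habs : ‖(bb T ξ ξ)‖ = |(⟪(ξ : H), (T ξ : H)⟫_ℂ).im| := by
      rw [bb_self]
      rw [Complex.norm_real, Real.norm_eq_abs]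
    rw [habs]
    have h1 : (⟪(u : H), (T u : H)⟫_ℂ).im
        = r⁻¹ * r⁻¹ * (⟪(ξ : H), (T ξ : H)⟫_ℂ).im := by
      rw [hinner]
      have : ((r⁻¹ : ℝ) : ℂ) * ((r⁻¹ : ℝ) : ℂ) = ((r⁻¹ * r⁻¹ : ℝ) : ℂ) := by push_cast; ring
      rw [this, Complex.im_ofReal_mul]
    rw [h1, abs_mul, abs_of_pos (mul_pos (inv_pos.mpr hrpos) (inv_pos.mpr hrpos))] at him
    have hr2 : (0:ℝ) < r⁻¹ * r⁻¹ := mul_pos (inv_pos.mpr hrpos) (inv_pos.mpr hrpos)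
    calc |(⟪(ξ : H), (T ξ : H)⟫_ℂ).im|
        = (r * r) * (r⁻¹ * r⁻¹ * |(⟪(ξ : H), (T ξ : H)⟫_ℂ).im|) := by
          field_simp
      _ ≤ (r * r) * α := by
          apply mul_le_mul_of_nonneg_left him (by positivity)
      _ = α * (r * r) := by ring

/-- Real-part polarization bound. -/
lemma bb_re_le {α : ℝ}
    (hdiag : ∀ ζ : T.domain, ‖(bb T ζ ζ)‖ ≤ α * (‖(ζ : H)‖ * ‖(ζ : H)‖))
    (ξ η : T.domain) :
    (bb T ξ η).re ≤ α / 2 * (‖(ξ : H)‖ * ‖(ξ : H)‖ + ‖(η : H)‖ * ‖(η : H)‖) := by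
  have hsum : bb T (ξ + η) (ξ + η) - bb T (ξ - η) (ξ - η)
      = 2 * (bb T ξ η + bb T η ξ) := by
    rw [bb_expand_add, bb_expand_sub]; ring
  have hconj : bb T η ξ = (starRingEnd ℂ) (bb T ξ η) := (bb_conj T ξ η).symm
  have hre : (bb T (ξ + η) (ξ + η)).re - (bb T (ξ - η) (ξ - η)).re
      = 4 * (bb T ξ η).re := by
    rw [← Complex.sub_re, hsum, hconj, Complex.add_conj]
    simp
    ring
  have h1 : (bb T (ξ + η) (ξ + η)).re ≤ α * (‖((ξ + η : T.domain) : H)‖ * ‖((ξ + η : T.domain) : H)‖) :=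
    le_trans (Complex.re_le_norm _) (hdiag _)
  have h2 : -(bb T (ξ - η) (ξ - η)).re ≤ α * (‖((ξ - η : T.domain) : H)‖ * ‖((ξ - η : T.domain) : H)‖) := by
    have := Complex.abs_re_le_norm (bb T (ξ - η) (ξ - η))
    have h' := hdiag (ξ - η)
    have := abs_le.mp (le_trans this h')
    linarith [this.1]
  have hpar : ‖(ξ : H) + (η : H)‖ * ‖(ξ : H) + (η : H)‖ + ‖(ξ : H) - (η : H)‖ * ‖(ξ : H) - (η : H)‖
      = 2 * (‖(ξ : H)‖ * ‖(ξ : H)‖ + ‖(η : H)‖ * ‖(η : H)‖) :=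
    by simpa only [sq] using parallelogram_law_with_norm ℂ (ξ : H) (η : H)
  have hca : ((ξ + η : T.domain) : H) = (ξ : H) + (η : H) := rfl
  have hcs : ((ξ - η : T.domain) : H) = (ξ : H) - (η : H) := rfl
  rw [hca] at h1
  rw [hcs] at h2
  have hmul : α * (‖(ξ : H) + (η : H)‖ * ‖(ξ : H) + (η : H)‖
      + ‖(ξ : H) - (η : H)‖ * ‖(ξ : H) - (η : H)‖)
      = α * (2 * (‖(ξ : H)‖ * ‖(ξ : H)‖ + ‖(η : H)‖ * ‖(η : H)‖)) := by rw [hpar]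
  linarith [h1, h2, hre, hmul]

/-- Absolute-value polarization bound (symmetric form). -/
lemma bb_abs_le_half {α : ℝ} (hα : 0 ≤ α)
    (hdiag : ∀ ζ : T.domain, ‖(bb T ζ ζ)‖ ≤ α * (‖(ζ : H)‖ * ‖(ζ : H)‖))
    (ξ η : T.domain) :
    ‖(bb T ξ η)‖ ≤ α / 2 * (‖(ξ : H)‖ * ‖(ξ : H)‖ + ‖(η : H)‖ * ‖(η : H)‖) := by
  rcases eq_or_ne (bb T ξ η) 0 with h0 | h0
  · rw [h0]
    simp only [norm_zero]
    positivity
  · set z := bb T ξ η with hz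
    set c : ℂ := (starRingEnd ℂ) z / (‖z‖ : ℂ) with hc
    have habs : ‖c‖ = 1 := by
      rw [hc, norm_div, Complex.norm_conj, Complex.norm_real, Real.norm_eq_abs,
        abs_of_pos (norm_pos_iff.mpr h0), div_self (ne_of_gt (norm_pos_iff.mpr h0))]
    have hzabs : ((‖z‖ : ℝ) : ℂ) ≠ 0 := by
      exact_mod_cast (ne_of_gt (norm_pos_iff.mpr h0))
    have hmul : c * z = (‖z‖ : ℂ) := by
      rw [hc, div_mul_eq_mul_div, mul_comm, Complex.mul_conj, Complex.normSq_eq_norm_sq,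
        eq_comm, eq_div_iff hzabs]
      push_cast
      ring
    have hb : bb T ξ (c • η) = (‖z‖ : ℂ) := by
      rw [bb_smul_right, ← hz, hmul]
    have hre : (bb T ξ (c • η)).re = ‖z‖ := by rw [hb]; simp
    have hnorm : ‖((c • η : T.domain) : H)‖ = ‖(η : H)‖ := by
      simp only [Submodule.coe_smul_of_tower, norm_smul]
      rw [habs, one_mul]
    have := bb_re_le hdiag ξ (c • η)
    rw [hre, hnorm] at this
    exact this

/-- The full sesquilinear bound. -/
lemma bb_abs_le {α : ℝ} (hα : 0 ≤ α)
    (hdiag : ∀ ζ : T.domain, ‖(bb T ζ ζ)‖ ≤ α * (‖(ζ : H)‖ * ‖(ζ : H)‖))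
    (ξ η : T.domain) :
    ‖(bb T ξ η)‖ ≤ α * (‖(ξ : H)‖ * ‖(η : H)‖) := by
  rcases eq_or_ne (ξ : H) 0 with hξ0 | hξ0
  · have : ξ = 0 := Subtype.ext hξ0
    subst this
    simp [bb]
  rcases eq_or_ne (η : H) 0 with hη0 | hη0
  · have : η = 0 := Subtype.ext hη0
    subst this
    simp [bb]
  have hξ : (0:ℝ) < ‖(ξ : H)‖ := norm_pos_iff.mpr hξ0
  have hη : (0:ℝ) < ‖(η : H)‖ := norm_pos_iff.mpr hη0
  set s : ℝ := Real.sqrt (‖(η : H)‖ / ‖(ξ : H)‖) with hs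
  have hspos : 0 < s := Real.sqrt_pos.mpr (div_pos hη hξ)
  have hs2 : s * s = ‖(η : H)‖ / ‖(ξ : H)‖ := Real.mul_self_sqrt (le_of_lt (div_pos hη hξ))
  have key := bb_abs_le_half hα hdiag (((s : ℂ)) • ξ) (((s⁻¹ : ℝ) : ℂ) • η)
  have hbeq : bb T (((s : ℂ)) • ξ) (((s⁻¹ : ℝ) : ℂ) • η) = bb T ξ η := by
    rw [bb_smul_left, bb_smul_right, Complex.conj_ofReal]
    have : ((s : ℝ) : ℂ) * ((s⁻¹ : ℝ) : ℂ) = 1 := by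
      push_cast
      rw [mul_inv_cancel₀]
      exact_mod_cast ne_of_gt hspos
    rw [← mul_assoc, this, one_mul]
  have hn1 : ‖(((((s : ℂ)) • ξ) : T.domain) : H)‖ = s * ‖(ξ : H)‖ := by
    simp only [Submodule.coe_smul_of_tower, norm_smul, Complex.norm_real, Real.norm_eq_abs]
    rw [abs_of_pos hspos]
  have hn2 : ‖((((((s⁻¹ : ℝ) : ℂ)) • η) : T.domain) : H)‖ = s⁻¹ * ‖(η : H)‖ := by
    simp only [Submodule.coe_smul_of_tower, norm_smul, Complex.norm_real, Real.norm_eq_abs]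
    rw [abs_of_pos (inv_pos.mpr hspos)]
  rw [hbeq, hn1, hn2] at key
  have harith : α / 2 * ((s * ‖(ξ : H)‖) * (s * ‖(ξ : H)‖)
      + (s⁻¹ * ‖(η : H)‖) * (s⁻¹ * ‖(η : H)‖)) = α * (‖(ξ : H)‖ * ‖(η : H)‖) := by
    have h1 : (s * ‖(ξ : H)‖) * (s * ‖(ξ : H)‖) = ‖(η : H)‖ * ‖(ξ : H)‖ := by
      have : (s * ‖(ξ : H)‖) * (s * ‖(ξ : H)‖) = (s * s) * (‖(ξ : H)‖ * ‖(ξ : H)‖) := by ring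
      rw [this, hs2]
      field_simp
    have hsinv : s⁻¹ * s⁻¹ = ‖(ξ : H)‖ / ‖(η : H)‖ := by
      rw [← mul_inv, hs2]
      rw [inv_div]
    have h2 : (s⁻¹ * ‖(η : H)‖) * (s⁻¹ * ‖(η : H)‖) = ‖(ξ : H)‖ * ‖(η : H)‖ := by
      have : (s⁻¹ * ‖(η : H)‖) * (s⁻¹ * ‖(η : H)‖) = (s⁻¹ * s⁻¹) * (‖(η : H)‖ * ‖(η : H)‖) := by ring
      rw [this, hsinv]
      field_simp
    rw [h1, h2]
    ring
  rw [harith] at key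
  exact key

lemma bb_add_left (ξ ξ' η : T.domain) :
    bb T (ξ + ξ') η = bb T ξ η + bb T ξ' η := by
  simp only [bb, T.map_add, Submodule.coe_add, inner_add_left, inner_add_right]
  ring

variable (T) in
/-- Existence of the bounded operator representing the form `bb`. -/
lemma exists_B [CompleteSpace H] {α : ℝ} (hα : 0 ≤ α) (hdense : Dense (T.domain : Set H))
    (hb : ∀ ξ η : T.domain, ‖(bb T ξ η)‖ ≤ α * (‖(ξ : H)‖ * ‖(η : H)‖)) :
    ∃ B : H →L[ℂ] H, ‖B‖ ≤ α ∧ ∀ η ξ : T.domain, ⟪B ↑η, ((ξ : H))⟫_ℂ = bb T η ξ := by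
  have hbound : ∀ η ξ : T.domain, ‖bb T η ξ‖ ≤ (α * ‖(η : H)‖) * ‖(ξ : H)‖ := by
    intro η ξ
    calc ‖(bb T η ξ)‖ ≤ α * (‖(η : H)‖ * ‖(ξ : H)‖) := hb η ξ
      _ = (α * ‖(η : H)‖) * ‖(ξ : H)‖ := by ring
  let F : T.domain → (T.domain →L[ℂ] ℂ) := fun η =>
    LinearMap.mkContinuous
      { toFun := fun ξ => bb T η ξ
        map_add' := fun a b => bb_add_right T η a b
        map_smul' := fun c ξ => bb_smul_right T c η ξ }
      (α * ‖(η : H)‖) (hbound η)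
  let Fe : T.domain → (H →L[ℂ] ℂ) := fun η =>
    (F η).extend (Submodule.subtypeL T.domain)
  have hFe : ∀ η ξ : T.domain, Fe η ↑ξ = bb T η ξ := fun η ξ =>
    ContinuousLinearMap.extend_eq _ hdense.denseRange_val
      isUniformEmbedding_subtype_val.isUniformInducing _
  let B0 : T.domain →ₗ[ℂ] H :=
    { toFun := fun η => (InnerProductSpace.toDual ℂ H).symm (Fe η)
      map_add' := fun η η' => hdense.eq_of_inner_left ℂ fun ξ hξ => by
        lift ξ to T.domain using hξ
        simp only [inner_add_left, InnerProductSpace.toDual_symm_apply, hFe, bb_add_left]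
      map_smul' := fun c η => hdense.eq_of_inner_left ℂ fun ξ hξ => by
        lift ξ to T.domain using hξ
        simp only [inner_smul_left, RingHom.id_apply, InnerProductSpace.toDual_symm_apply,
          hFe, bb_smul_left] }
  have hB0inner : ∀ η ξ : T.domain, ⟪B0 η, ((ξ : H))⟫_ℂ = bb T η ξ := by
    intro η ξ
    show ⟪(InnerProductSpace.toDual ℂ H).symm (Fe η), ((ξ : H))⟫_ℂ = bb T η ξ
    rw [InnerProductSpace.toDual_symm_apply, hFe]
  have hB0norm : ∀ η : T.domain, ‖B0 η‖ ≤ α * ‖η‖ := by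
    intro η
    have h1 : ‖B0 η‖ = ‖Fe η‖ := by
      show ‖(InnerProductSpace.toDual ℂ H).symm (Fe η)‖ = ‖Fe η‖
      exact LinearIsometryEquiv.norm_map _ _
    have h2 : ‖Fe η‖ ≤ ((1 : NNReal) : ℝ) * ‖F η‖ :=
      ContinuousLinearMap.opNorm_extend_le (F η)
        hdense.denseRange_val (fun x => by simp)
    have h3 : ‖F η‖ ≤ α * ‖(η : H)‖ :=
      LinearMap.mkContinuous_norm_le _ (by positivity) _
    have hnn : ‖(η : H)‖ = ‖η‖ := rfl
    rw [h1]
    calc ‖Fe η‖ ≤ ((1 : NNReal) : ℝ) * ‖F η‖ := h2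
      _ = ‖F η‖ := by norm_num
      _ ≤ α * ‖η‖ := by rw [← hnn]; exact h3
  let B0c : T.domain →L[ℂ] H := LinearMap.mkContinuous B0 α hB0norm
  let B : H →L[ℂ] H :=
    B0c.extend (Submodule.subtypeL T.domain)
  have hBapp : ∀ η : T.domain, B ↑η = B0 η := fun η =>
    ContinuousLinearMap.extend_eq _ hdense.denseRange_val
      isUniformEmbedding_subtype_val.isUniformInducing _
  refine ⟨B, ?_, fun η ξ => by rw [hBapp]; exact hB0inner η ξ⟩
  have h2 : ‖B‖ ≤ ((1 : NNReal) : ℝ) * ‖B0c‖ :=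
    ContinuousLinearMap.opNorm_extend_le B0c
      hdense.denseRange_val (fun x => by simp)
  have h3 : ‖B0c‖ ≤ α := LinearMap.mkContinuous_norm_le _ hα _
  calc ‖B‖ ≤ ((1 : NNReal) : ℝ) * ‖B0c‖ := h2
    _ = ‖B0c‖ := by norm_num
    _ ≤ α := h3

end StripAux

/-- a densely defined operator with numerical range in the horizontal strip
`{λ : |Im λ| ≤ α}` decomposes as `T = S + iB` with `S` symmetric on `D(T)` and `B` bounded
self-adjoint with `‖B‖ ≤ α`; moreover `D(T) ⊆ D(T*)`, `S = ½(T + T*)` and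
`B|_{D(T)} = (2i)⁻¹ (T - T*)`. -/
theorem strip_decomposition {H : Type*} [NormedAddCommGroup H]
    [InnerProductSpace ℂ H] [CompleteSpace H] (α : ℝ) (hα : 0 ≤ α)
    (T : H →ₗ.[ℂ] H) (hdense : Dense (T.domain : Set H))
    (hW : numRange T ⊆ {z : ℂ | |z.im| ≤ α}) :
    ∃ (S : H →ₗ.[ℂ] H) (B : H →L[ℂ] H),
      S.domain = T.domain ∧
      (∀ ξ η : S.domain, ⟪(S ξ : H), (η : H)⟫_ℂ = ⟪(ξ : H), S η⟫_ℂ) ∧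
      IsSelfAdjoint B ∧ ‖B‖ ≤ α ∧
      (∀ x : H, ∀ (hx : x ∈ T.domain) (hxS : x ∈ S.domain),
        T ⟨x, hx⟩ = S ⟨x, hxS⟩ + Complex.I • B x) ∧
      (∀ x : H, x ∈ T.domain → x ∈ T.adjoint.domain) ∧
      (∀ x : H, ∀ (hx : x ∈ T.domain) (hxS : x ∈ S.domain) (hxA : x ∈ T.adjoint.domain),
        S ⟨x, hxS⟩ = (2 : ℂ)⁻¹ • (T ⟨x, hx⟩ + T.adjoint ⟨x, hxA⟩) ∧
        B x = (2 * Complex.I)⁻¹ • (T ⟨x, hx⟩ - T.adjoint ⟨x, hxA⟩)) := by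
  classical
  have hdiag : ∀ ζ : T.domain, ‖(StripAux.bb T ζ ζ)‖ ≤ α * (‖(ζ : H)‖ * ‖(ζ : H)‖) :=
    StripAux.bb_self_abs_le hα hW
  have hb : ∀ ξ η : T.domain, ‖(StripAux.bb T ξ η)‖ ≤ α * (‖(ξ : H)‖ * ‖(η : H)‖) :=
    StripAux.bb_abs_le hα hdiag
  obtain ⟨B, hBnorm, hBinner⟩ := StripAux.exists_B T hα hdense hb
  have hBsym : ∀ ξ η : T.domain, ⟪((ξ : H)), B ↑η⟫_ℂ = ⟪B ↑ξ, ((η : H))⟫_ℂ := by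
    intro ξ η
    calc ⟪((ξ : H)), B ↑η⟫_ℂ = (starRingEnd ℂ) ⟪B ↑η, ((ξ : H))⟫_ℂ :=
          (inner_conj_symm _ _).symm
      _ = (starRingEnd ℂ) (StripAux.bb T η ξ) := by rw [hBinner]
      _ = StripAux.bb T ξ η := StripAux.bb_conj T η ξ
      _ = ⟪B ↑ξ, ((η : H))⟫_ℂ := (hBinner ξ η).symm
  have hBsa : IsSelfAdjoint B := by
    rw [ContinuousLinearMap.isSelfAdjoint_iff']
    apply ContinuousLinearMap.coeFn_injective
    apply (ContinuousLinearMap.adjoint B).continuous.ext_on hdense B.continuous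
    intro x hx
    apply hdense.eq_of_inner_left ℂ
    intro v hv
    rw [ContinuousLinearMap.adjoint_inner_left]
    exact hBsym ⟨x, hx⟩ ⟨v, hv⟩
  set S : H →ₗ.[ℂ] H :=
    ⟨T.domain, T.toFun - Complex.I • ((B : H →ₗ[ℂ] H).comp (T.domain.subtype))⟩ with hS
  have hSapp : ∀ ξ : T.domain, S ξ = T ξ - Complex.I • B ↑ξ := fun ξ => rfl
  have hkey0 : ∀ ξ η : T.domain, ⟪(S ξ : H), ((η : H))⟫_ℂ = ⟪((ξ : H)), (S η : H)⟫_ℂ := by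
    intro ξ η
    rw [hSapp, hSapp, inner_sub_left, inner_sub_right, inner_smul_left, inner_smul_right,
      Complex.conj_I, hBsym ξ η, hBinner ξ η]
    have hid : ⟪((ξ : H)), (T η : H)⟫_ℂ - ⟪(T ξ : H), ((η : H))⟫_ℂ
        = (2 * Complex.I) * StripAux.bb T ξ η := by
      rw [StripAux.bb]
      have h2I : (2 * Complex.I) ≠ 0 := mul_ne_zero two_ne_zero Complex.I_ne_zero
      field_simp
    linear_combination -hid
  have hdecomp : ∀ ξ : T.domain, T ξ = S ξ + Complex.I • B ↑ξ := by
    intro ξ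
    rw [hSapp]
    abel
  have hkey : ∀ ξ v : T.domain,
      ⟪(S ξ : H) - Complex.I • B ↑ξ, ((v : H))⟫_ℂ = ⟪((ξ : H)), (T v : H)⟫_ℂ := by
    intro ξ v
    rw [inner_sub_left, inner_smul_left, Complex.conj_I, hdecomp v, inner_add_right,
      inner_smul_right, hkey0 ξ v, hBsym ξ v]
    ring
  have hmem : ∀ x, x ∈ T.domain → x ∈ T.adjoint.domain := fun x hx =>
    LinearPMap.mem_adjoint_domain_of_exists _
      ⟨S ⟨x, hx⟩ - Complex.I • B x, fun v => hkey ⟨x, hx⟩ v⟩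
  have hadj : ∀ x (hx : x ∈ T.domain) (hxA : x ∈ T.adjoint.domain),
      T.adjoint ⟨x, hxA⟩ = S ⟨x, hx⟩ - Complex.I • B x := fun x hx hxA =>
    LinearPMap.adjoint_apply_eq hdense ⟨x, hxA⟩ (fun v => hkey ⟨x, hx⟩ v)
  refine ⟨S, B, rfl, fun ξ η => hkey0 ξ η, hBsa, hBnorm, ?_, hmem, ?_⟩
  · intro x hx hxS
    exact hdecomp ⟨x, hx⟩
  · intro x hx hxS hxA
    have h1 := hdecomp ⟨x, hx⟩
    have h2 := hadj x hx hxA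
    constructor
    · show S ⟨x, hx⟩ = (2 : ℂ)⁻¹ • (T ⟨x, hx⟩ + T.adjoint ⟨x, hxA⟩)
      rw [h1, h2]
      have h3 : (S ⟨x, hx⟩ + Complex.I • B x) + (S ⟨x, hx⟩ - Complex.I • B x)
          = (2 : ℂ) • S ⟨x, hx⟩ := by module
      rw [h3, smul_smul, inv_mul_cancel₀ (two_ne_zero), one_smul]
    · rw [h1, h2]
      have h3 : (S ⟨x, hx⟩ + Complex.I • B x) - (S ⟨x, hx⟩ - Complex.I • B x)
          = (2 * Complex.I) • B x := by module
      rw [h3, smul_smul,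
        inv_mul_cancel₀ (mul_ne_zero two_ne_zero Complex.I_ne_zero), one_smul]
end

section
/- Let T be a densely defined operator with numerical range in the closed horizontal strip {λ : |Im λ| ≤ α}, with canonical decomposition T = S + iB (S symmetric, D(S) = D(T), B ∈ B(H) self-adjoint with ‖B‖ ≤ α). If T' is any extension of T with numerical range in the same closed strip and T' = S' + iB' is its canonical decomposition, then B' = B and S ⊆ S'. Conversely, for every symmetric extension S' of S, the operator S' + iB extends T and has numerical range in the closed strip. This gives a one-to-one correspondence between symmetric extensions of S and extensions of T with numerical range in the closed strip. -/
open scoped InnerProductSpace ComplexInnerProductSpace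

/-- A complex number fixed by conjugation is real. -/
lemma aux_conj_real {z : ℂ} (h : (starRingEnd ℂ) z = z) : z.im = 0 :=
  Complex.conj_eq_iff_im.mp h

/-- one-to-one correspondence between symmetric extensions of `S` and
extensions of `T = S + iB` with numerical range in the closed strip `{λ : |Im λ| ≤ α}`. -/
theorem strip_extension_correspondence {H : Type*} [NormedAddCommGroup H]
    [InnerProductSpace ℂ H] [CompleteSpace H] (α : ℝ) (hα : 0 ≤ α)
    (T S : H →ₗ.[ℂ] H) (B : H →L[ℂ] H)
    (hdense : Dense (T.domain : Set H))
    (hW : numRange T ⊆ {z : ℂ | |z.im| ≤ α})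
    (hSdom : S.domain = T.domain)
    (hSsym : ∀ ξ η : S.domain, ⟪(S ξ : H), (η : H)⟫_ℂ = ⟪(ξ : H), S η⟫_ℂ)
    (hBsa : IsSelfAdjoint B) (hBnorm : ‖B‖ ≤ α)
    (hdec : ∀ x : H, ∀ (hx : x ∈ T.domain) (hxS : x ∈ S.domain),
      T ⟨x, hx⟩ = S ⟨x, hxS⟩ + Complex.I • B x) :
    -- (1) the canonical decomposition of any extension of `T` with numerical range in the
    -- strip has the same bounded part `B` and symmetric part extending `S`
    (∀ (T' S' : H →ₗ.[ℂ] H) (B' : H →L[ℂ] H), T ≤ T' →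
      numRange T' ⊆ {z : ℂ | |z.im| ≤ α} →
      S'.domain = T'.domain →
      (∀ ξ η : S'.domain, ⟪(S' ξ : H), (η : H)⟫_ℂ = ⟪(ξ : H), S' η⟫_ℂ) →
      IsSelfAdjoint B' → ‖B'‖ ≤ α →
      (∀ x : H, ∀ (hx : x ∈ T'.domain) (hxS : x ∈ S'.domain),
        T' ⟨x, hx⟩ = S' ⟨x, hxS⟩ + Complex.I • B' x) →
      B' = B ∧ S ≤ S') ∧
    -- (2) conversely, for every symmetric extension `S'` of `S`, the operator `S' + iB`
    -- extends `T` and has numerical range in the closed strip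
    (∀ S' : H →ₗ.[ℂ] H, S ≤ S' →
      (∀ ξ η : S'.domain, ⟪(S' ξ : H), (η : H)⟫_ℂ = ⟪(ξ : H), S' η⟫_ℂ) →
      ∃ T' : H →ₗ.[ℂ] H, T'.domain = S'.domain ∧
        (∀ x : H, ∀ (hx : x ∈ T'.domain) (hxS : x ∈ S'.domain),
          T' ⟨x, hx⟩ = S' ⟨x, hxS⟩ + Complex.I • B x) ∧
        T ≤ T' ∧ numRange T' ⊆ {z : ℂ | |z.im| ≤ α}) := by
  have hBsym := ContinuousLinearMap.isSelfAdjoint_iff_isSymmetric.mp hBsa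
  have hBreal : ∀ x : H, (⟪x, B x⟫_ℂ).im = 0 := fun x =>
    aux_conj_real (by rw [inner_conj_symm]; exact hBsym x x)
  constructor
  · rintro T' S' B' hTT' hW' hS'dom hS'sym hB'sa hB'norm hdec'
    have hB'sym := ContinuousLinearMap.isSelfAdjoint_iff_isSymmetric.mp hB'sa
    have hB'real : ∀ x : H, (⟪x, B' x⟫_ℂ).im = 0 := fun x =>
      aux_conj_real (by rw [inner_conj_symm]; exact hB'sym x x)
    -- quadratic forms of B and B' agree on the dense domain of T
    have key : ∀ x ∈ T.domain, ⟪x, B' x⟫_ℂ = ⟪x, B x⟫_ℂ := by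
      intro x hx
      have hxS : x ∈ S.domain := hSdom ▸ hx
      have hx' : x ∈ T'.domain := hTT'.1 hx
      have hxS' : x ∈ S'.domain := hS'dom ▸ hx'
      have h1 := hdec x hx hxS
      have h2 := hdec' x hx' hxS'
      have hTeq : T ⟨x, hx⟩ = T' ⟨x, hx'⟩ := hTT'.2 rfl
      have hsreal : (⟪x, (S ⟨x, hxS⟩ : H)⟫_ℂ).im = 0 :=
        aux_conj_real (by rw [inner_conj_symm]; exact hSsym ⟨x, hxS⟩ ⟨x, hxS⟩)
      have hs'real : (⟪x, (S' ⟨x, hxS'⟩ : H)⟫_ℂ).im = 0 :=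
        aux_conj_real (by rw [inner_conj_symm]; exact hS'sym ⟨x, hxS'⟩ ⟨x, hxS'⟩)
      have e : ⟪x, (S ⟨x, hxS⟩ : H)⟫_ℂ + Complex.I * ⟪x, B x⟫_ℂ
          = ⟪x, (S' ⟨x, hxS'⟩ : H)⟫_ℂ + Complex.I * ⟪x, B' x⟫_ℂ := by
        have := congrArg (fun y : H => ⟪x, y⟫_ℂ) (h1.symm.trans (hTeq.trans h2))
        simpa [inner_add_right, inner_smul_right] using this
      have eim := congrArg Complex.im e
      simp [Complex.add_im, Complex.mul_im, hsreal, hs'real, hBreal x, hB'real x] at eim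
      exact Complex.ext (by simpa using eim.symm) (by rw [hBreal x, hB'real x])
    have hq : ∀ x : H, ⟪x, (B' - B) x⟫_ℂ = 0 := by
      have hc : Continuous fun x : H => ⟪x, (B' - B) x⟫_ℂ :=
        continuous_id.inner (B' - B).continuous
      have heq : (fun x : H => ⟪x, (B' - B) x⟫_ℂ) = fun _ => (0 : ℂ) := by
        refine Continuous.ext_on hdense hc continuous_const ?_
        intro x hx
        simp only [ContinuousLinearMap.sub_apply, inner_sub_right]
        rw [key x hx, sub_self]
      exact fun x => congrFun heq x
    have hB'B : B' = B := by
      have h0 : ((B' - B : H →L[ℂ] H) : H →ₗ[ℂ] H) = 0 := by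
        rw [← inner_map_self_eq_zero]
        intro x
        rw [← inner_conj_symm]
        show (starRingEnd ℂ) ⟪x, (B' - B) x⟫_ℂ = 0
        rw [hq x, map_zero]
      have : (B' - B : H →L[ℂ] H) = 0 := ContinuousLinearMap.coe_injective
        (by rw [h0]; rfl)
      exact sub_eq_zero.mp this
    refine ⟨hB'B, ?_, ?_⟩
    · rw [hSdom, hS'dom]; exact hTT'.1
    · intro ξ η hxy
      have hx : (ξ : H) ∈ T.domain := hSdom ▸ ξ.2
      have hx' : (ξ : H) ∈ T'.domain := hTT'.1 hx
      have h1 := hdec (ξ : H) hx ξ.2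
      have h2 := hdec' (ξ : H) hx' (hxy ▸ η.2)
      have hTeq : T ⟨(ξ : H), hx⟩ = T' ⟨(ξ : H), hx'⟩ := hTT'.2 rfl
      have : S ξ + Complex.I • B (ξ : H) = S' ⟨(ξ : H), hxy ▸ η.2⟩ + Complex.I • B' (ξ : H) := by
        rw [← h1, ← h2]; exact hTeq
      rw [hB'B] at this
      have hval : S ξ = S' ⟨(ξ : H), hxy ▸ η.2⟩ := by
        have := add_right_cancel this
        exact this
      rw [hval]
      congr 1
      exact Subtype.ext hxy
  · intro S' hSS' hS'sym
    refine ⟨⟨S'.domain, S'.toFun + ((Complex.I • (B : H →ₗ[ℂ] H)).comp S'.domain.subtype)⟩,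
      rfl, ?_, ?_, ?_⟩
    · intro x hx hxS
      rfl
    · refine ⟨fun x hx => hSS'.1 (by rw [hSdom]; exact hx), ?_⟩
      intro ξ η hxy
      have hxS : (ξ : H) ∈ S.domain := by rw [hSdom]; exact ξ.2
      have h1 := hdec (ξ : H) ξ.2 hxS
      have hSval : S ⟨(ξ : H), hxS⟩ = S' η :=
        hSS'.2 (by simpa using hxy)
      show T ξ = S' η + Complex.I • B (η : H)
      rw [← hxy]
      calc T ξ = T ⟨(ξ : H), ξ.2⟩ := rfl
        _ = S ⟨(ξ : H), hxS⟩ + Complex.I • B (ξ : H) := h1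
        _ = S' η + Complex.I • B (ξ : H) := by rw [hSval]
    · rintro z ⟨ξ, hξ, hz⟩
      have happ : ⟪(ξ : H), (S' ⟨(ξ : H), ξ.2⟩ : H) + Complex.I • B (ξ : H)⟫_ℂ = z := hz
      have hsreal : (⟪(ξ : H), (S' ⟨(ξ : H), ξ.2⟩ : H)⟫_ℂ).im = 0 :=
        aux_conj_real (by rw [inner_conj_symm]; exact hS'sym ⟨(ξ : H), ξ.2⟩ ⟨(ξ : H), ξ.2⟩)
      have hzim : z.im = (⟪(ξ : H), B (ξ : H)⟫_ℂ).re := by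
        rw [← happ, inner_add_right, inner_smul_right]
        simp [Complex.add_im, Complex.mul_im, hsreal, hBreal (ξ : H)]
      have hb : ‖(⟪(ξ : H), B (ξ : H)⟫_ℂ)‖ ≤ ‖B‖ := by
        calc ‖(⟪(ξ : H), B (ξ : H)⟫_ℂ)‖ ≤ ‖(ξ : H)‖ * ‖B (ξ : H)‖ := norm_inner_le_norm _ _
          _ ≤ ‖(ξ : H)‖ * (‖B‖ * ‖(ξ : H)‖) := by
              gcongr; exact B.le_opNorm _
          _ = ‖B‖ := by rw [hξ]; ring
      have := (Complex.abs_re_le_norm (⟪(ξ : H), B (ξ : H)⟫_ℂ))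
      simp only [Set.mem_setOf_eq, hzim]
      calc |(⟪(ξ : H), B (ξ : H)⟫_ℂ).re| ≤ ‖(⟪(ξ : H), B (ξ : H)⟫_ℂ)‖ :=
            Complex.abs_re_le_norm _
        _ ≤ ‖B‖ := hb
        _ ≤ α := hBnorm
end

section
/- Let α ≥ 0 and let T = S + iB be a densely defined operator on a complex Hilbert space, where S is symmetric with D(S) = D(T), B ∈ B(H) is self-adjoint with ‖B‖ ≤ α, so that the numerical range of T lies in the closed strip {λ : |Im λ| ≤ α}. If S is maximal symmetric then T is maximal among operators with numerical range in the closed strip; and conversely, if T is maximal among operators with numerical range in the closed strip, then S is maximal symmetric. -/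
open scoped InnerProductSpace ComplexInnerProductSpace

/-- A (densely defined) operator is symmetric if `⟪Sξ, η⟫ = ⟪ξ, Sη⟫` on its domain. -/
def IsSymmetricPMap {H : Type*} [NormedAddCommGroup H] [InnerProductSpace ℂ H]
    (S : H →ₗ.[ℂ] H) : Prop :=
  ∀ ξ η : S.domain, ⟪(S ξ : H), (η : H)⟫_ℂ = ⟪(ξ : H), S η⟫_ℂ

section Aux

variable {H : Type*} [NormedAddCommGroup H] [InnerProductSpace ℂ H]

/-- Auxiliary: the partial map `A + c • B` on `A.domain`. -/
noncomputable def auxAddSmul (A : H →ₗ.[ℂ] H) (c : ℂ) (B : H →L[ℂ] H) : H →ₗ.[ℂ] H :=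
  ⟨A.domain, A.toFun + c • ((B : H →ₗ[ℂ] H).comp A.domain.subtype)⟩

@[simp] lemma auxAddSmul_domain (A : H →ₗ.[ℂ] H) (c : ℂ) (B : H →L[ℂ] H) :
    (auxAddSmul A c B).domain = A.domain := rfl

lemma auxAddSmul_apply (A : H →ₗ.[ℂ] H) (c : ℂ) (B : H →L[ℂ] H)
    (ξ : (auxAddSmul A c B).domain) :
    (auxAddSmul A c B) ξ = A ⟨(ξ : H), ξ.2⟩ + c • B (ξ : H) := rfl

lemma im_diag_of_symm {S : H →ₗ.[ℂ] H} (h : IsSymmetricPMap S) (ξ : S.domain) :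
    (⟪(ξ : H), S ξ⟫_ℂ).im = 0 := by
  rw [← Complex.conj_eq_iff_im, inner_conj_symm]
  exact h ξ ξ

lemma symm_of_im_diag {A : H →ₗ.[ℂ] H} (h : ∀ ξ : A.domain, (⟪(ξ : H), A ξ⟫_ℂ).im = 0) :
    IsSymmetricPMap A := by
  set f : A.domain → A.domain → ℂ := fun ξ η => ⟪(A ξ : H), (η : H)⟫_ℂ - ⟪(ξ : H), A η⟫_ℂ with hf
  have hdiag : ∀ ξ, f ξ ξ = 0 := by
    intro ξ
    have heq : ⟪(A ξ : H), (ξ : H)⟫_ℂ = ⟪(ξ : H), (A ξ : H)⟫_ℂ :=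
      calc ⟪(A ξ : H), (ξ : H)⟫_ℂ
          = (starRingEnd ℂ) ⟪(ξ : H), (A ξ : H)⟫_ℂ := (inner_conj_symm _ _).symm
        _ = ⟪(ξ : H), (A ξ : H)⟫_ℂ := Complex.conj_eq_iff_im.mpr (h ξ)
    simp [hf, heq]
  have hsum : ∀ ξ η, f ξ η + f η ξ = 0 := by
    intro ξ η
    have h0 := hdiag (ξ + η)
    simp only [hf, LinearPMap.map_add, Submodule.coe_add, inner_add_left, inner_add_right] at h0 ⊢
    have h1 := hdiag ξ; have h2 := hdiag η
    simp only [hf] at h1 h2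
    linear_combination h0 - h1 - h2
  intro ξ η
  have h1 := hsum ξ η
  have h2 := hsum ξ (Complex.I • η)
  simp only [hf, LinearPMap.map_smul, Submodule.coe_smul, inner_smul_left, inner_smul_right,
    Complex.conj_I] at h2
  simp only [hf] at h1
  linear_combination (h1 + (-Complex.I) * h2) / 2 + ((⟪(A ξ : H), (η : H)⟫_ℂ -
    ⟪(ξ : H), (A η : H)⟫_ℂ - ⟪(A η : H), (ξ : H)⟫_ℂ + ⟪(η : H), (A ξ : H)⟫_ℂ) / 2) * Complex.I_sq

lemma abs_im_inner_le {α : ℝ} {A : H →ₗ.[ℂ] H}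
    (h : numRange A ⊆ {z : ℂ | |z.im| ≤ α}) (ξ : A.domain) :
    |(⟪(ξ : H), A ξ⟫_ℂ).im| ≤ α * ‖(ξ : H)‖ ^ 2 := by
  by_cases hz : (ξ : H) = 0
  · simp [hz, inner_zero_left]
  · have hr : 0 < ‖(ξ : H)‖ := norm_pos_iff.mpr hz
    set r : ℝ := ‖(ξ : H)‖ with hrdef
    set u : A.domain := ((r⁻¹ : ℂ) • ξ) with hu
    have hun : ‖(u : H)‖ = 1 := by
      rw [hu, Submodule.coe_smul, norm_smul]
      simp only [norm_inv, Complex.norm_real, Real.norm_eq_abs, abs_of_pos hr]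
      field_simp
      exact hrdef.symm
    have hmem : ⟪(u : H), A u⟫_ℂ ∈ numRange A := ⟨u, hun, rfl⟩
    have hle : |(⟪(u : H), A u⟫_ℂ).im| ≤ α := h hmem
    have hval : (⟪(u : H), A u⟫_ℂ).im = (r⁻¹) ^ 2 * (⟪(ξ : H), A ξ⟫_ℂ).im := by
      rw [hu, LinearPMap.map_smul, Submodule.coe_smul, inner_smul_left, inner_smul_right]
      have : (starRingEnd ℂ) ((r : ℂ)⁻¹) = (r : ℂ)⁻¹ := by
        rw [← Complex.ofReal_inv, Complex.conj_ofReal]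
      rw [this, ← mul_assoc, ← Complex.ofReal_inv, ← Complex.ofReal_mul]
      rw [Complex.im_ofReal_mul]
      ring
    rw [hval, abs_mul, abs_of_pos (by positivity : (0:ℝ) < (r⁻¹)^2)] at hle
    calc |(⟪(ξ : H), A ξ⟫_ℂ).im| = (r⁻¹)^2 * |(⟪(ξ : H), A ξ⟫_ℂ).im| * r^2 := by
          field_simp
      _ ≤ α * r ^ 2 := by nlinarith [sq_nonneg r]

end Aux

set_option maxHeartbeats 1000000 in
/-- for `T = S + iB` (canonical decomposition, closed strip `|Im λ| ≤ α`),
`T` is maximal among operators with numerical range in the closed strip if and only if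
`S` is maximal symmetric. -/
theorem strip_maximal_iff_symmetric_maximal {H : Type*} [NormedAddCommGroup H]
    [InnerProductSpace ℂ H] [CompleteSpace H] (α : ℝ) (hα : 0 ≤ α)
    (T S : H →ₗ.[ℂ] H) (B : H →L[ℂ] H)
    (hdense : Dense (T.domain : Set H))
    (hSdom : S.domain = T.domain)
    (hSsym : IsSymmetricPMap S)
    (hBsa : IsSelfAdjoint B) (hBnorm : ‖B‖ ≤ α)
    (hdec : ∀ x : H, ∀ (hx : x ∈ T.domain) (hxS : x ∈ S.domain),
      T ⟨x, hx⟩ = S ⟨x, hxS⟩ + Complex.I • B x) :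
    ((numRange T ⊆ {z : ℂ | |z.im| ≤ α}) ∧
      ∀ T' : H →ₗ.[ℂ] H, T ≤ T' → numRange T' ⊆ {z : ℂ | |z.im| ≤ α} → T' = T) ↔
    (∀ S' : H →ₗ.[ℂ] H, S ≤ S' → IsSymmetricPMap S' → S' = S) := by
  have hBsym : ∀ x y : H, ⟪B x, y⟫_ℂ = ⟪x, B y⟫_ℂ := fun x y => hBsa.isSymmetric x y
  have hBreal : ∀ x : H, (⟪x, B x⟫_ℂ).im = 0 := by
    intro x
    rw [← Complex.conj_eq_iff_im, inner_conj_symm]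
    exact hBsym x x
  have hBbound : ∀ x : H, |(⟪x, B x⟫_ℂ).re| ≤ α * ‖x‖ ^ 2 := by
    intro x
    have h1 : |(⟪x, B x⟫_ℂ).re| ≤ ‖⟪x, B x⟫_ℂ‖ := Complex.abs_re_le_norm _
    have h2 : ‖⟪x, B x⟫_ℂ‖ ≤ ‖x‖ * ‖B x‖ := norm_inner_le_norm _ _
    have h3 : ‖B x‖ ≤ ‖B‖ * ‖x‖ := B.le_opNorm x
    nlinarith [norm_nonneg x, norm_nonneg (B x), norm_nonneg B]
  -- imaginary part of the diagonal of T
  have him_T : ∀ ξ : T.domain, (⟪(ξ : H), T ξ⟫_ℂ).im = (⟪(ξ : H), B (ξ : H)⟫_ℂ).re := by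
    intro ξ
    have hxS : (ξ : H) ∈ S.domain := hSdom.symm ▸ ξ.2
    have hd := hdec (ξ : H) ξ.2 hxS
    have hξ : (⟨(ξ : H), ξ.2⟩ : T.domain) = ξ := rfl
    rw [hξ] at hd
    rw [hd, inner_add_right, inner_smul_right]
    have hs : (⟪(ξ : H), S ⟨(ξ : H), hxS⟩⟫_ℂ).im = 0 := im_diag_of_symm hSsym ⟨(ξ : H), hxS⟩
    simp [Complex.add_im, Complex.mul_im, hs, hBreal]
  have hTrange : numRange T ⊆ {z : ℂ | |z.im| ≤ α} := by
    rintro z ⟨ξ, hξ1, rfl⟩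
    simp only [Set.mem_setOf_eq]
    rw [him_T ξ]
    have := hBbound (ξ : H)
    rw [hξ1] at this
    simpa using this
  constructor
  · rintro ⟨-, hmax⟩ S' hSS' hS'sym
    set T'' := auxAddSmul S' Complex.I B with hT''
    have hT_le : T ≤ T'' := by
      constructor
      · exact hSdom ▸ hSS'.1
      · intro x y hxy
        have hxS : (x : H) ∈ S.domain := hSdom.symm ▸ x.2
        have hd := hdec (x : H) x.2 hxS
        have hx : (⟨(x : H), x.2⟩ : T.domain) = x := rfl
        rw [hx] at hd
        have hS'eq : S ⟨(x : H), hxS⟩ = S' ⟨(y : H), y.2⟩ := hSS'.2 (by simpa using hxy)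
        rw [hd, auxAddSmul_apply, ← hS'eq, show B (y:H) = B (x:H) from congrArg B hxy.symm]
    have hrange'' : numRange T'' ⊆ {z : ℂ | |z.im| ≤ α} := by
      rintro z ⟨ξ, hξ1, rfl⟩
      simp only [Set.mem_setOf_eq]
      rw [auxAddSmul_apply, inner_add_right, inner_smul_right]
      have hs : (⟪(ξ : H), S' ⟨(ξ : H), ξ.2⟩⟫_ℂ).im = 0 := im_diag_of_symm hS'sym ⟨(ξ : H), ξ.2⟩
      have hb := hBbound (ξ : H)
      rw [hξ1] at hb
      simp only [Complex.add_im, Complex.mul_im, Complex.I_re, Complex.I_im, hs,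
        hBreal (ξ : H), zero_add, zero_mul, one_mul, mul_zero]
      simpa using hb
    have heq : T'' = T := hmax T'' hT_le hrange''
    have hdomeq : S.domain = S'.domain := by
      rw [hSdom, ← heq]; rfl
    exact (LinearPMap.eq_of_le_of_domain_eq hSS' hdomeq).symm
  · intro hSmax
    refine ⟨hTrange, ?_⟩
    intro T' hTT' hrange'
    -- the Hermitian form measuring the failure of Im⟪ξ,T'η⟫-type form to be given by B
    set c : T'.domain → T'.domain → ℂ := fun ξ η =>
      (⟪(ξ : H), T' η⟫_ℂ - (starRingEnd ℂ) ⟪(η : H), T' ξ⟫_ℂ) / (2 * Complex.I)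
        - ⟪(ξ : H), B (η : H)⟫_ℂ with hc
    have c_herm : ∀ ξ η, (starRingEnd ℂ) (c η ξ) = c ξ η := by
      intro ξ η
      simp only [hc, map_sub, map_div₀, map_mul, Complex.conj_I, RingHomCompTriple.comp_apply,
        RingHom.id_apply, Complex.conj_conj, map_ofNat]
      rw [inner_conj_symm (B (ξ : H)) ((η : H)), hBsym]
      have : (2 : ℂ) * Complex.I ≠ 0 := by
        simp [Complex.I_ne_zero]
      field_simp
      ring
    have c_diag : ∀ ξ : T'.domain,
        c ξ ξ = (((⟪(ξ : H), T' ξ⟫_ℂ).im - (⟪(ξ : H), B (ξ : H)⟫_ℂ).re : ℝ) : ℂ) := by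
      intro ξ
      have h1 : (((⟪(ξ : H), T' ξ⟫_ℂ).im : ℝ) : ℂ)
          = (⟪(ξ : H), T' ξ⟫_ℂ - (starRingEnd ℂ) ⟪(ξ : H), T' ξ⟫_ℂ) / (2 * Complex.I) :=
        Complex.im_eq_sub_conj _
      have h2 : ⟪(ξ : H), B (ξ : H)⟫_ℂ = (((⟪(ξ : H), B (ξ : H)⟫_ℂ).re : ℝ) : ℂ) := by
        exact (Complex.conj_eq_iff_re.mp (Complex.conj_eq_iff_im.mpr (hBreal _))).symm
      rw [hc]
      push_cast
      rw [← h1, ← h2]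
    have c_diag_abs : ∀ ξ : T'.domain, ‖c ξ ξ‖ ≤ 2 * α * ‖(ξ : H)‖ ^ 2 := by
      intro ξ
      rw [c_diag, Complex.norm_real, Real.norm_eq_abs]
      have h1 := abs_im_inner_le hrange' ξ
      have h2 := hBbound (ξ : H)
      calc |(⟪(ξ : H), T' ξ⟫_ℂ).im - (⟪(ξ : H), B (ξ : H)⟫_ℂ).re|
          ≤ |(⟪(ξ : H), T' ξ⟫_ℂ).im| + |(⟪(ξ : H), B (ξ : H)⟫_ℂ).re| := abs_sub _ _
        _ ≤ 2 * α * ‖(ξ : H)‖ ^ 2 := by linarith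
    have c_zero_T : ∀ ξ : T'.domain, (ξ : H) ∈ T.domain → c ξ ξ = 0 := by
      intro ξ hξT
      have hval : T ⟨(ξ : H), hξT⟩ = T' ξ := hTT'.2 rfl
      have him : (⟪(ξ : H), T' ξ⟫_ℂ).im = (⟪(ξ : H), B (ξ : H)⟫_ℂ).re := by
        rw [← hval]; exact him_T ⟨(ξ : H), hξT⟩
      rw [c_diag, him]
      simp
    -- sesquilinearity
    have c_add_left : ∀ ξ η ζ, c (ξ + η) ζ = c ξ ζ + c η ζ := by
      intro ξ η ζ
      simp only [hc, LinearPMap.map_add, Submodule.coe_add, inner_add_left, inner_add_right,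
        map_add]
      field_simp
      ring
    have c_add_right : ∀ ξ η ζ, c ξ (η + ζ) = c ξ η + c ξ ζ := by
      intro ξ η ζ
      simp only [hc, LinearPMap.map_add, Submodule.coe_add, inner_add_left, inner_add_right,
        map_add]
      field_simp
      ring
    have c_smul_left : ∀ (a : ℂ) ξ η, c (a • ξ) η = (starRingEnd ℂ) a * c ξ η := by
      intro a ξ η
      simp only [hc, LinearPMap.map_smul, Submodule.coe_smul, inner_smul_left, inner_smul_right,
        map_mul, Complex.conj_conj]
      field_simp
    have c_smul_right : ∀ (a : ℂ) ξ η, c ξ (a • η) = a * c ξ η := by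
      intro a ξ η
      simp only [hc, LinearPMap.map_smul, Submodule.coe_smul, ContinuousLinearMap.map_smul,
        inner_smul_left, inner_smul_right, map_mul, Complex.conj_conj]
      field_simp
    -- real part bound via polarization and the parallelogram law
    have c_re_bound : ∀ ξ η, ‖c ξ η + c η ξ‖ ≤ 2 * α * (‖(ξ : H)‖ ^ 2 + ‖(η : H)‖ ^ 2) := by
      intro ξ η
      have hexp : c (ξ + η) (ξ + η) - c (ξ - η) (ξ - η) = 2 * (c ξ η + c η ξ) := by
        simp only [hc, LinearPMap.map_add, LinearPMap.map_sub, Submodule.coe_add,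
          Submodule.coe_sub, inner_add_left, inner_add_right, inner_sub_left, inner_sub_right,
          map_add, map_sub, ContinuousLinearMap.map_add, ContinuousLinearMap.map_sub]
        field_simp
        ring
      have h1 := c_diag_abs (ξ + η)
      have h2 := c_diag_abs (ξ - η)
      have hpar : ‖((ξ + η : T'.domain) : H)‖ ^ 2 + ‖((ξ - η : T'.domain) : H)‖ ^ 2
          = 2 * (‖(ξ : H)‖ ^ 2 + ‖(η : H)‖ ^ 2) := by
        push_cast
        have := parallelogram_law_with_norm ℂ (ξ : H) (η : H)
        nlinarith [this]
      have : ‖(2 : ℂ) * (c ξ η + c η ξ)‖ ≤ 2 * α * (‖((ξ + η : T'.domain) : H)‖ ^ 2)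
          + 2 * α * (‖((ξ - η : T'.domain) : H)‖ ^ 2) := by
        rw [← hexp]
        calc ‖c (ξ + η) (ξ + η) - c (ξ - η) (ξ - η)‖
            ≤ ‖c (ξ + η) (ξ + η)‖ + ‖c (ξ - η) (ξ - η)‖ := norm_sub_le _ _
          _ ≤ _ := by linarith
      rw [norm_mul, Complex.norm_ofNat] at this
      nlinarith [this, norm_nonneg (c ξ η + c η ξ)]
    -- full modulus bound
    have c_mod : ∀ ξ η, ‖c ξ η‖ ≤ α * (‖(ξ : H)‖ ^ 2 + ‖(η : H)‖ ^ 2) := by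
      intro ξ η
      by_cases h0 : c ξ η = 0
      · rw [h0, norm_zero]
        positivity
      · set a : ℂ := c ξ η / ‖c ξ η‖ with ha
        have hr0 : (0:ℝ) < ‖c ξ η‖ := norm_pos_iff.mpr h0
        have hna : ‖a‖ = 1 := by
          rw [ha, norm_div, Complex.norm_real, Real.norm_eq_abs, abs_of_pos hr0]
          exact div_self hr0.ne'
        have hz : c η ξ = (starRingEnd ℂ) (c ξ η) := by
          rw [← Complex.conj_conj (c η ξ), c_herm]
        have hmul : (starRingEnd ℂ) (c ξ η) * c ξ η = ((‖c ξ η‖ : ℝ) : ℂ) ^ 2 := by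
          rw [Complex.conj_mul']
        have hcne : ((‖c ξ η‖ : ℝ) : ℂ) ≠ 0 := by
          exact_mod_cast hr0.ne'
        have key : c (a • ξ) η + c η (a • ξ) = 2 * ((‖c ξ η‖ : ℝ) : ℂ) := by
          have e : c (a • ξ) η + c η (a • ξ)
              = (starRingEnd ℂ) a * c ξ η + a * ((starRingEnd ℂ) (c ξ η)) := by
            rw [c_smul_left, c_smul_right, hz]
          rw [e, ha, map_div₀, Complex.conj_ofReal, div_mul_eq_mul_div, div_mul_eq_mul_div,
            hmul, mul_comm (c ξ η) ((starRingEnd ℂ) (c ξ η)), hmul, ← add_div, sq]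
          rw [div_eq_iff hcne]
          ring
        have hb := c_re_bound (a • ξ) η
        rw [key] at hb
        have hn2 : ‖(2 * ((‖c ξ η‖ : ℝ) : ℂ) : ℂ)‖ = 2 * ‖c ξ η‖ := by
          rw [norm_mul, Complex.norm_ofNat, Complex.norm_real, Real.norm_eq_abs,
            abs_of_pos hr0]
        rw [hn2] at hb
        have hns : ‖((a • ξ : T'.domain) : H)‖ = ‖(ξ : H)‖ := by
          rw [Submodule.coe_smul, norm_smul, hna, one_mul]
        rw [hns] at hb
        linarith
    -- scaled and product bounds
    have c_prod : ∀ ξ η, ‖c ξ η‖ ≤ 2 * α * ‖(ξ : H)‖ * ‖(η : H)‖ := by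
      intro ξ η
      have c_zero_left : ∀ ζ, c 0 ζ = 0 := by
        intro ζ
        have h := c_add_left 0 0 ζ
        rw [add_zero] at h
        exact (add_eq_right.mp h.symm)
      have c_zero_right : ∀ ζ, c ζ 0 = 0 := by
        intro ζ
        have h := c_add_right ζ 0 0
        rw [add_zero] at h
        exact (add_eq_right.mp h.symm)
      by_cases hx0 : (ξ : H) = 0
      · have hξ0 : ξ = 0 := Subtype.ext hx0
        rw [hξ0, c_zero_left, norm_zero]
        positivity
      by_cases hy0 : (η : H) = 0
      · have hη0 : η = 0 := Subtype.ext hy0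
        rw [hη0, c_zero_right, norm_zero]
        positivity
      have hxp : (0:ℝ) < ‖(ξ : H)‖ := norm_pos_iff.mpr hx0
      have hyp : (0:ℝ) < ‖(η : H)‖ := norm_pos_iff.mpr hy0
      set t : ℝ := Real.sqrt (‖(η : H)‖ / ‖(ξ : H)‖) with ht
      have htp : 0 < t := Real.sqrt_pos.mpr (by positivity)
      have ht2 : t ^ 2 = ‖(η : H)‖ / ‖(ξ : H)‖ := Real.sq_sqrt (by positivity)
      have hsc : c ((t : ℂ) • ξ) (((t⁻¹ : ℝ) : ℂ) • η) = c ξ η := by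
        rw [c_smul_left, c_smul_right, Complex.conj_ofReal]
        rw [← mul_assoc]
        push_cast
        rw [mul_inv_cancel₀ (by exact_mod_cast htp.ne' : (t:ℂ) ≠ 0), one_mul]
      have hb := c_mod ((t : ℂ) • ξ) (((t⁻¹ : ℝ) : ℂ) • η)
      rw [hsc] at hb
      have hn1 : ‖(((t : ℂ) • ξ : T'.domain) : H)‖ = t * ‖(ξ : H)‖ := by
        rw [Submodule.coe_smul, norm_smul, Complex.norm_real, Real.norm_eq_abs, abs_of_pos htp]
      have hn2 : ‖((((t⁻¹ : ℝ) : ℂ) • η : T'.domain) : H)‖ = t⁻¹ * ‖(η : H)‖ := by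
        rw [Submodule.coe_smul, norm_smul, Complex.norm_real, Real.norm_eq_abs,
          abs_of_pos (inv_pos.mpr htp)]
      rw [hn1, hn2] at hb
      have hval : α * ((t * ‖(ξ : H)‖) ^ 2 + (t⁻¹ * ‖(η : H)‖) ^ 2)
          = 2 * α * ‖(ξ : H)‖ * ‖(η : H)‖ := by
        have hti2 : (t⁻¹) ^ 2 = ‖(ξ : H)‖ / ‖(η : H)‖ := by
          rw [inv_pow, ht2]
          rw [inv_div]
        rw [mul_pow, mul_pow, ht2, hti2]
        field_simp
        ring
      rw [hval] at hb
      exact hb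
    -- the diagonal of c vanishes everywhere, by density
    have c_diag_zero : ∀ ξ : T'.domain, c ξ ξ = 0 := by
      intro ξ
      have hbound : ∀ δ : ℝ, 0 < δ → ‖c ξ ξ‖ ≤ 2 * α * δ * (2 * ‖(ξ : H)‖ + δ) := by
        intro δ hδ
        obtain ⟨y, hyb, hyT⟩ := Metric.dense_iff.mp hdense (ξ : H) δ hδ
        set η : T'.domain := ⟨y, hTT'.1 hyT⟩ with hη
        have hdist : ‖(ξ : H) - y‖ < δ := by
          rw [← dist_eq_norm, dist_comm]
          exact Metric.mem_ball.mp hyb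
        have hsplit : c ξ ξ = c (ξ - η) ξ + c η (ξ - η) + c η η := by
          have e1 : c ξ ξ = c (ξ - η) ξ + c η ξ := by
            rw [← c_add_left]; congr 1; abel
          have e2 : c η ξ = c η (ξ - η) + c η η := by
            rw [← c_add_right]; congr 1; abel
          rw [e1, e2]; ring
        have hczero : c η η = 0 := c_zero_T η hyT
        have hnd : ‖((ξ - η : T'.domain) : H)‖ ≤ δ := by
          rw [Submodule.coe_sub]
          exact le_of_lt hdist
        have hnη : ‖(η : H)‖ ≤ ‖(ξ : H)‖ + δ := by
          calc ‖(η : H)‖ = ‖(ξ : H) - ((ξ : H) - y)‖ := by rw [hη]; congr 1; abel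
            _ ≤ ‖(ξ : H)‖ + ‖(ξ : H) - y‖ := norm_sub_le _ _
            _ ≤ ‖(ξ : H)‖ + δ := by linarith
        have h1 := c_prod (ξ - η) ξ
        have h2 := c_prod η (ξ - η)
        rw [hsplit, hczero, add_zero]
        calc ‖c (ξ - η) ξ + c η (ξ - η)‖ ≤ ‖c (ξ - η) ξ‖ + ‖c η (ξ - η)‖ := norm_add_le _ _
          _ ≤ 2 * α * ‖((ξ - η : T'.domain) : H)‖ * ‖(ξ : H)‖
              + 2 * α * ‖(η : H)‖ * ‖((ξ - η : T'.domain) : H)‖ := by linarith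
          _ ≤ 2 * α * δ * ‖(ξ : H)‖ + 2 * α * (‖(ξ : H)‖ + δ) * δ := by
              have hn0 : (0:ℝ) ≤ ‖((ξ - η : T'.domain) : H)‖ := norm_nonneg _
              have h2' : ‖(η : H)‖ * ‖((ξ - η : T'.domain) : H)‖ ≤ (‖(ξ : H)‖ + δ) * δ :=
                mul_le_mul hnη hnd hn0 (by positivity)
              nlinarith [mul_le_mul_of_nonneg_left h2' (by positivity : (0:ℝ) ≤ 2 * α),
                mul_le_mul_of_nonneg_left
                  (mul_le_mul_of_nonneg_right hnd (norm_nonneg ((ξ : H))))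
                  (by positivity : (0:ℝ) ≤ 2 * α)]
          _ = 2 * α * δ * (2 * ‖(ξ : H)‖ + δ) := by ring
      rw [← norm_eq_zero]
      by_contra hne
      have hpos : 0 < ‖c ξ ξ‖ := lt_of_le_of_ne (norm_nonneg _) (Ne.symm hne)
      set M : ℝ := 2 * α * (2 * ‖(ξ : H)‖ + 1) + 1 with hM
      have hMpos : 0 < M := by
        have := norm_nonneg (ξ : H)
        positivity
      set δ : ℝ := min 1 (‖c ξ ξ‖ / (2 * M)) with hδdef
      have hδpos : 0 < δ := lt_min one_pos (by positivity)
      have hδ1 : δ ≤ 1 := min_le_left _ _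
      have hδ2 : δ ≤ ‖c ξ ξ‖ / (2 * M) := min_le_right _ _
      have hb := hbound δ hδpos
      have hstep : 2 * α * δ * (2 * ‖(ξ : H)‖ + δ) ≤ δ * M := by
        have hαδ : 0 ≤ 2 * α * δ := by positivity
        have : 2 * ‖(ξ : H)‖ + δ ≤ 2 * ‖(ξ : H)‖ + 1 := by linarith
        nlinarith [norm_nonneg (ξ : H), hδpos.le]
      have hfin : ‖c ξ ξ‖ ≤ δ * M := le_trans hb hstep
      have hlt : δ * M ≤ ‖c ξ ξ‖ / 2 := by
        rw [le_div_iff₀ (by positivity : (0:ℝ) < 2 * M)] at hδ2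
        nlinarith
      clear_value δ M
      linarith [hfin, hlt, hpos]
    -- conclude: S'' := T' - iB is a symmetric extension of S
    set S'' := auxAddSmul T' (-Complex.I) B with hS''
    have hS''sym : IsSymmetricPMap S'' := by
      apply symm_of_im_diag
      intro ξ
      rw [auxAddSmul_apply, inner_add_right, inner_smul_right]
      have hcd := c_diag_zero ξ
      rw [c_diag ξ] at hcd
      have : (⟪(ξ : H), T' ξ⟫_ℂ).im - (⟪(ξ : H), B (ξ : H)⟫_ℂ).re = 0 := by
        exact_mod_cast hcd
      have hξeq : (⟨(ξ : H), ξ.2⟩ : T'.domain) = ξ := rfl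
      rw [hξeq]
      simp only [Complex.add_im, Complex.mul_im, Complex.neg_re, Complex.neg_im,
        Complex.I_re, Complex.I_im, hBreal (ξ : H)]
      simp only [neg_zero, zero_mul, mul_zero, add_zero, zero_add]
      linarith
    have hS_le : S ≤ S'' := by
      constructor
      · intro x hx
        exact hTT'.1 (hSdom ▸ hx)
      · intro x y hxy
        have hxT : (x : H) ∈ T.domain := hSdom ▸ x.2
        have hd := hdec (x : H) hxT x.2
        have hx : (⟨(x : H), x.2⟩ : S.domain) = x := rfl
        rw [hx] at hd
        have hT'eq : T ⟨(x : H), hxT⟩ = T' ⟨(y : H), y.2⟩ := hTT'.2 (by simpa using hxy)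
        rw [auxAddSmul_apply]
        have hyx : B (y : H) = B (x : H) := congrArg B hxy.symm
        rw [← hT'eq, hd, hyx]
        rw [neg_smul]
        abel
    have heq : S'' = S := hSmax S'' hS_le hS''sym
    have hdomeq : T.domain = T'.domain := by
      rw [← hSdom, ← heq]; rfl
    exact (LinearPMap.eq_of_le_of_domain_eq hTT' hdomeq).symm
end

section
/- Let T be a densely defined operator on a complex Hilbert space with numerical range contained in the closed horizontal strip {λ : |Im λ| ≤ α}. Then D(T) = D(T*) if and only if every λ with |Im λ| > α belongs to the resolvent set of T. -/
open scoped InnerProductSpace ComplexInnerProductSpace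
open Complex

namespace StripAux


variable {H : Type*} [NormedAddCommGroup H] [InnerProductSpace ℂ H]
variable {T : H →ₗ.[ℂ] H} {α : ℝ}

/-- quadratic bound from the numerical range hypothesis -/
theorem im_le (hα : 0 ≤ α) (hW : numRange T ⊆ {z : ℂ | |z.im| ≤ α}) (ξ : T.domain) :
    |(⟪(ξ : H), T ξ⟫_ℂ).im| ≤ α * ‖(ξ : H)‖ ^ 2 := by
  by_cases h : (ξ : H) = 0
  · have hξ : ξ = 0 := Subtype.ext h
    simp [hξ, hα]
  · have hr : 0 < ‖(ξ : H)‖ := norm_pos_iff.mpr h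
    set r := ‖(ξ : H)‖ with hrdef
    set ξ' : T.domain := ((r : ℂ)⁻¹) • ξ with hξ'
    have hcoe : (ξ' : H) = (r : ℂ)⁻¹ • (ξ : H) := rfl
    have hnorm : ‖(ξ' : H)‖ = 1 := by
      rw [hcoe, norm_smul, norm_inv, Complex.norm_real, Real.norm_eq_abs,
        abs_of_pos hr, inv_mul_cancel₀ hr.ne']
    have hle := hW ⟨ξ', hnorm, rfl⟩
    simp only [Set.mem_setOf_eq] at hle
    have hval : ⟪(ξ' : H), T ξ'⟫_ℂ = ((r⁻¹ * r⁻¹ : ℝ) : ℂ) * ⟪(ξ : H), T ξ⟫_ℂ := by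
      rw [hcoe, hξ', T.map_smul, inner_smul_left, inner_smul_right]
      push_cast
      rw [map_inv₀, Complex.conj_ofReal]
      ring
    have him : (⟪(ξ' : H), T ξ'⟫_ℂ).im = (r⁻¹ * r⁻¹) * (⟪(ξ : H), T ξ⟫_ℂ).im := by
      rw [hval]; simp [Complex.mul_im]
    rw [him, abs_mul, abs_of_pos (by positivity : (0:ℝ) < r⁻¹ * r⁻¹)] at hle
    have h2 : r⁻¹ * r⁻¹ * r ^ 2 = 1 := by rw [pow_two]; field_simp
    nlinarith [abs_nonneg ((⟪(ξ : H), T ξ⟫_ℂ).im), sq_nonneg r]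

noncomputable def nf (T : H →ₗ.[ℂ] H) (ζ ξ : T.domain) : ℂ :=
  ⟪(ζ : H), T ξ⟫_ℂ - ⟪(T ζ : H), (ξ : H)⟫_ℂ

theorem nf_conj (T : H →ₗ.[ℂ] H) (ζ ξ : T.domain) :
    (starRingEnd ℂ) (nf T ζ ξ) = - nf T ξ ζ := by
  simp only [nf, map_sub, inner_conj_symm]
  ring

theorem nf_smul_smul (T : H →ₗ.[ℂ] H) (a b : ℂ) (ζ ξ : T.domain) :
    nf T (a • ζ) (b • ξ) = (starRingEnd ℂ) a * b * nf T ζ ξ := by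
  simp only [nf, Submodule.coe_smul, T.map_smul, inner_smul_left, inner_smul_right]
  ring

theorem nf_polar (T : H →ₗ.[ℂ] H) (ζ ξ : T.domain) :
    nf T (ζ + ξ) (ζ + ξ) - nf T (ζ - ξ) (ζ - ξ) = 2 * (nf T ζ ξ + nf T ξ ζ) := by
  simp only [nf, Submodule.coe_add, Submodule.coe_sub, map_add, map_sub,
    inner_add_left, inner_add_right, inner_sub_left, inner_sub_right,
    LinearPMap.map_add, LinearPMap.map_sub]
  ring

theorem nf_diag_norm (hα : 0 ≤ α) (hW : numRange T ⊆ {z : ℂ | |z.im| ≤ α}) (ξ : T.domain) :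
    ‖nf T ξ ξ‖ ≤ 2 * α * ‖(ξ : H)‖ ^ 2 := by
  have h1 : nf T ξ ξ = ((2 * (⟪(ξ : H), T ξ⟫_ℂ).im : ℝ)) * I := by
    rw [nf, ← inner_conj_symm (T ξ : H) (ξ : H), Complex.sub_conj]
  have him : |(⟪(ξ : H), T ξ⟫_ℂ).im| ≤ α * ‖(ξ : H)‖ ^ 2 := im_le hα hW ξ
  rw [h1, norm_mul, Complex.norm_I, mul_one, Complex.norm_real, Real.norm_eq_abs,
    abs_mul]
  rw [_root_.abs_two]
  nlinarith

/-- imaginary-part polarization bound -/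
theorem nf_im_le (hα : 0 ≤ α) (hW : numRange T ⊆ {z : ℂ | |z.im| ≤ α}) (ζ ξ : T.domain) :
    |(nf T ζ ξ).im| ≤ α * (‖(ζ : H)‖ ^ 2 + ‖(ξ : H)‖ ^ 2) := by
  have hpolar := nf_polar T ζ ξ
  have hsum : nf T ζ ξ + nf T ξ ζ = (2 * (nf T ζ ξ).im : ℝ) * I := by
    have := nf_conj T ζ ξ
    have h2 : nf T ξ ζ = - (starRingEnd ℂ) (nf T ζ ξ) := by rw [this]; ring
    rw [h2, ← Complex.sub_conj]; ring
  have hnorm : ‖nf T (ζ + ξ) (ζ + ξ) - nf T (ζ - ξ) (ζ - ξ)‖ ≤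
      2 * α * ‖((ζ : H) + ξ)‖ ^ 2 + 2 * α * ‖((ζ : H) - ξ)‖ ^ 2 := by
    refine (norm_sub_le _ _).trans ?_
    have h1 := nf_diag_norm hα hW (ζ + ξ)
    have h2 := nf_diag_norm hα hW (ζ - ξ)
    simp only [Submodule.coe_add, Submodule.coe_sub] at h1 h2
    linarith
  rw [hpolar, hsum] at hnorm
  have hL : ‖(2:ℂ) * ((2 * (nf T ζ ξ).im : ℝ) * I)‖ = 4 * |(nf T ζ ξ).im| := by
    rw [norm_mul, norm_mul, Complex.norm_I, mul_one, Complex.norm_real, Real.norm_eq_abs,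
      abs_mul, _root_.abs_two]
    norm_num; ring
  rw [hL] at hnorm
  have hpar : ‖((ζ : H) + ξ)‖ ^ 2 + ‖((ζ : H) - ξ)‖ ^ 2 =
      2 * (‖(ζ : H)‖ ^ 2 + ‖(ξ : H)‖ ^ 2) := by
    have := parallelogram_law_with_norm ℂ (ζ : H) (ξ : H)
    nlinarith [this]
  nlinarith


theorem nf_zero_left (T : H →ₗ.[ℂ] H) (ζ ξ : T.domain) (h : (ζ : H) = 0) : nf T ζ ξ = 0 := by
  have hz : ζ = 0 := Subtype.ext h
  subst hz
  simp [nf]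

theorem nf_le (hα : 0 ≤ α) (hW : numRange T ⊆ {z : ℂ | |z.im| ≤ α}) (ζ ξ : T.domain) :
    ‖nf T ζ ξ‖ ≤ 2 * α * ‖(ζ : H)‖ * ‖(ξ : H)‖ := by
  by_cases hn : nf T ζ ξ = 0
  · rw [hn, norm_zero]; positivity
  by_cases hζ : (ζ : H) = 0
  · exact absurd (nf_zero_left T ζ ξ hζ) hn
  by_cases hξ : (ξ : H) = 0
  · -- nf ζ ξ = 0 when ξ = 0 : use smul with b = 0? simpler: ξ = 0 as subtype
    have : ξ = 0 := Subtype.ext hξ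
    subst this
    have := nf_smul_smul T 1 0 ζ 0
    simp at this
    exact absurd this hn
  have hζn : 0 < ‖(ζ : H)‖ := norm_pos_iff.mpr hζ
  have hξn : 0 < ‖(ξ : H)‖ := norm_pos_iff.mpr hξ
  have hnn : 0 < ‖nf T ζ ξ‖ := norm_pos_iff.mpr hn
  set s : ℝ := Real.sqrt (‖(ξ : H)‖ / ‖(ζ : H)‖) with hs
  have hspos : 0 < s := Real.sqrt_pos.mpr (by positivity)
  set c : ℂ := (starRingEnd ℂ) ((‖nf T ζ ξ‖ : ℂ) * I / nf T ζ ξ) with hc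
  have hcnorm : ‖c‖ = 1 := by
    rw [hc, RCLike.norm_conj, norm_div, norm_mul, Complex.norm_I, Complex.norm_real,
      Real.norm_eq_abs, abs_of_pos hnn, mul_one, div_self hnn.ne']
  set a : ℂ := (s : ℂ) * c with ha
  have key := nf_im_le hα hW (a • ζ) (((s⁻¹ : ℝ) : ℂ) • ξ)
  have hval : nf T (a • ζ) (((s⁻¹ : ℝ) : ℂ) • ξ) = (‖nf T ζ ξ‖ : ℂ) * I := by
    rw [nf_smul_smul]
    rw [ha, map_mul, Complex.conj_conj, Complex.conj_ofReal]
    have : ((s : ℂ) * ((‖nf T ζ ξ‖ : ℂ) * I / nf T ζ ξ)) * ((s⁻¹ : ℝ) : ℂ)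
        * nf T ζ ξ = ((s : ℂ) * ((s⁻¹ : ℝ) : ℂ)) * ((‖nf T ζ ξ‖ : ℂ) * I)
        * (nf T ζ ξ / nf T ζ ξ) := by ring
    rw [this, div_self hn]
    push_cast
    rw [mul_inv_cancel₀ (by exact_mod_cast hspos.ne' : (s:ℂ) ≠ 0)]
    ring
  have him : (nf T (a • ζ) (((s⁻¹ : ℝ) : ℂ) • ξ)).im = ‖nf T ζ ξ‖ := by
    rw [hval]; simp
  rw [him] at key
  have hnorma : ‖((a • ζ : T.domain) : H)‖ = s * ‖(ζ : H)‖ := by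
    have : ((a • ζ : T.domain) : H) = a • (ζ : H) := rfl
    rw [this, norm_smul, ha, norm_mul, hcnorm, mul_one, Complex.norm_real,
      Real.norm_eq_abs, abs_of_pos hspos]
  have hnormb : ‖(((((s⁻¹ : ℝ) : ℂ)) • ξ : T.domain) : H)‖ = s⁻¹ * ‖(ξ : H)‖ := by
    have : (((((s⁻¹ : ℝ) : ℂ)) • ξ : T.domain) : H) = (((s⁻¹ : ℝ) : ℂ)) • (ξ : H) := rfl
    rw [this, norm_smul, Complex.norm_real, Real.norm_eq_abs, abs_of_pos (by positivity)]
  rw [_root_.abs_of_nonneg (norm_nonneg _), hnorma, hnormb] at key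
  have hs2 : s ^ 2 = ‖(ξ : H)‖ / ‖(ζ : H)‖ := Real.sq_sqrt (by positivity)
  have e1 : (s * ‖(ζ : H)‖) ^ 2 = ‖(ξ : H)‖ * ‖(ζ : H)‖ := by
    rw [mul_pow, hs2]; field_simp
  have e2 : (s⁻¹ * ‖(ξ : H)‖) ^ 2 = ‖(ζ : H)‖ * ‖(ξ : H)‖ := by
    rw [mul_pow, inv_pow, hs2]
    field_simp
  rw [e1, e2] at key
  nlinarith

/-- lower bound for `T - l` -/

theorem lower_bound (hα : 0 ≤ α) (hW : numRange T ⊆ {z : ℂ | |z.im| ≤ α}) (l : ℂ) (ξ : T.domain) :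
    (|l.im| - α) * ‖(ξ : H)‖ ≤ ‖T ξ - l • (ξ : H)‖ := by
  by_cases h : (ξ : H) = 0
  · simp [h]
  have hr : 0 < ‖(ξ : H)‖ := norm_pos_iff.mpr h
  have him := im_le hα hW ξ
  have hinner : ⟪(ξ : H), (T ξ : H) - l • (ξ : H)⟫_ℂ
      = ⟪(ξ : H), T ξ⟫_ℂ - l * ((‖(ξ : H)‖ : ℂ) ^ 2) := by
    rw [inner_sub_right, inner_smul_right, inner_self_eq_norm_sq_to_K]
    norm_num
  have himval : (⟪(ξ : H), (T ξ : H) - l • (ξ : H)⟫_ℂ).im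
      = (⟪(ξ : H), T ξ⟫_ℂ).im - l.im * ‖(ξ : H)‖ ^ 2 := by
    rw [hinner]
    simp [Complex.sub_im, Complex.mul_im, pow_two]
  have step1 : |l.im * ‖(ξ : H)‖ ^ 2| - |(⟪(ξ : H), T ξ⟫_ℂ).im|
      ≤ |(⟪(ξ : H), (T ξ : H) - l • (ξ : H)⟫_ℂ).im| := by
    rw [himval, abs_sub_comm]
    exact abs_sub_abs_le_abs_sub _ _
  have step2 : |(⟪(ξ : H), (T ξ : H) - l • (ξ : H)⟫_ℂ).im|
      ≤ ‖⟪(ξ : H), (T ξ : H) - l • (ξ : H)⟫_ℂ‖ := by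
    exact Complex.abs_im_le_norm _
  have step3 : ‖⟪(ξ : H), (T ξ : H) - l • (ξ : H)⟫_ℂ‖
      ≤ ‖(ξ : H)‖ * ‖(T ξ : H) - l • (ξ : H)‖ := norm_inner_le_norm _ _
  have habs : |l.im * ‖(ξ : H)‖ ^ 2| = |l.im| * ‖(ξ : H)‖ ^ 2 := by
    rw [abs_mul, _root_.abs_of_nonneg (by positivity : (0:ℝ) ≤ ‖(ξ : H)‖ ^ 2)]
  nlinarith

/-- norm bound via a dense subspace -/
theorem norm_le_dense (hdense : Dense (T.domain : Set H)) {v : H} {M : ℝ} (hM : 0 ≤ M)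
    (h : ∀ ζ : T.domain, ‖⟪(ζ : H), v⟫_ℂ‖ ≤ M * ‖(ζ : H)‖) : ‖v‖ ≤ M := by
  obtain ⟨u, hu, hulim⟩ := mem_closure_iff_seq_limit.mp (hdense v)
  have h1 : Filter.Tendsto (fun n => ⟪u n, v⟫_ℂ) Filter.atTop (nhds ⟪v, v⟫_ℂ) :=
    Filter.Tendsto.inner hulim tendsto_const_nhds
  have h2 : Filter.Tendsto (fun n => M * ‖u n‖) Filter.atTop (nhds (M * ‖v‖)) :=
    (hulim.norm).const_mul M
  have h3 : ‖⟪v, v⟫_ℂ‖ ≤ M * ‖v‖ :=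
    le_of_tendsto_of_tendsto' h1.norm h2 fun n => h ⟨u n, hu n⟩
  have h4 : ‖⟪v, v⟫_ℂ‖ = ‖v‖ ^ 2 := by
    rw [inner_self_eq_norm_sq_to_K]
    simp [norm_pow, Complex.norm_real, Real.norm_eq_abs, _root_.abs_of_nonneg (norm_nonneg v)]

  rw [h4] at h3
  by_cases hv : v = 0
  · simp [hv, hM]
  · have : 0 < ‖v‖ := norm_pos_iff.mpr hv
    nlinarith
theorem cauchySeq_of_bound {u v : ℕ → H} {c : ℝ} (hc : 0 < c)
    (h : ∀ i j, c * ‖v i - v j‖ ≤ ‖u i - u j‖) (hu : CauchySeq u) : CauchySeq v := by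
  rw [Metric.cauchySeq_iff] at hu ⊢
  intro ε hε
  obtain ⟨N, hN⟩ := hu (c * ε) (by positivity)
  refine ⟨N, fun m hm n hn => ?_⟩
  have := hN m hm n hn
  rw [dist_eq_norm] at this ⊢
  have h2 := h m n
  have : c * ‖v m - v n‖ < c * ε := lt_of_le_of_lt h2 this
  exact lt_of_mul_lt_mul_left this hc.le

variable [CompleteSpace H]

theorem mem_adjoint_of_mem (hα : 0 ≤ α) (hW : numRange T ⊆ {z : ℂ | |z.im| ≤ α})
    (ξ : T.domain) : (ξ : H) ∈ T.adjoint.domain := by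
  rw [LinearPMap.mem_adjoint_domain_iff]
  apply AddMonoidHomClass.continuous_of_bound ((innerₛₗ ℂ ((ξ : H))).comp T.toFun) (‖(T ξ : H)‖ + 2 * α * ‖(ξ : H)‖)
  intro ζ
  have hval : ((innerₛₗ ℂ ((ξ : H))).comp T.toFun) ζ = ⟪(ξ : H), T ζ⟫_ℂ := rfl
  have hnf : ⟪(ξ : H), T ζ⟫_ℂ = ⟪(T ξ : H), (ζ : H)⟫_ℂ + nf T ξ ζ := by
    rw [nf]; ring
  have hb1 : ‖⟪(T ξ : H), (ζ : H)⟫_ℂ‖ ≤ ‖(T ξ : H)‖ * ‖(ζ : H)‖ := norm_inner_le_norm _ _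
  have hb2 := nf_le hα hW ξ ζ
  have hζ : ‖ζ‖ = ‖(ζ : H)‖ := rfl
  rw [hval, hnf, hζ]
  calc ‖⟪(T ξ : H), (ζ : H)⟫_ℂ + nf T ξ ζ‖
      ≤ ‖⟪(T ξ : H), (ζ : H)⟫_ℂ‖ + ‖nf T ξ ζ‖ := norm_add_le _ _
    _ ≤ ‖(T ξ : H)‖ * ‖(ζ : H)‖ + 2 * α * ‖(ξ : H)‖ * ‖(ζ : H)‖ := by linarith
    _ = (‖(T ξ : H)‖ + 2 * α * ‖(ξ : H)‖) * ‖(ζ : H)‖ := by ring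

theorem inner_sub_adjoint (hdense : Dense (T.domain : Set H)) (ξ : T.domain)
    (ξ' : T.adjoint.domain) (hcoe : (ξ' : H) = (ξ : H)) (ζ : T.domain) :
    ⟪(ζ : H), (T ξ : H) - T.adjoint ξ'⟫_ℂ = nf T ζ ξ := by
  rw [inner_sub_right, nf]
  congr 1
  have h1 := LinearPMap.adjoint_isFormalAdjoint hdense ξ' ζ
  calc ⟪(ζ : H), T.adjoint ξ'⟫_ℂ = (starRingEnd ℂ) ⟪(T.adjoint ξ' : H), (ζ : H)⟫_ℂ :=
        (inner_conj_symm _ _).symm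
    _ = (starRingEnd ℂ) ⟪(ξ' : H), T ζ⟫_ℂ := by rw [h1]
    _ = ⟪(T ζ : H), (ξ' : H)⟫_ℂ := inner_conj_symm _ _
    _ = ⟪(T ζ : H), (ξ : H)⟫_ℂ := by rw [hcoe]

theorem norm_sub_adjoint_le (hα : 0 ≤ α) (hW : numRange T ⊆ {z : ℂ | |z.im| ≤ α})
    (hdense : Dense (T.domain : Set H)) (ξ : T.domain)
    (ξ' : T.adjoint.domain) (hcoe : (ξ' : H) = (ξ : H)) :
    ‖(T ξ : H) - T.adjoint ξ'‖ ≤ 2 * α * ‖(ξ : H)‖ := by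
  refine norm_le_dense hdense (by positivity) fun ζ => ?_
  rw [inner_sub_adjoint hdense ξ ξ' hcoe ζ]
  calc ‖nf T ζ ξ‖ ≤ 2 * α * ‖(ζ : H)‖ * ‖(ξ : H)‖ := nf_le hα hW ζ ξ
    _ = 2 * α * ‖(ξ : H)‖ * ‖(ζ : H)‖ := by ring

set_option maxHeartbeats 1000000 in
theorem forward (hα : 0 ≤ α) (hW : numRange T ⊆ {z : ℂ | |z.im| ≤ α})
    (hdense : Dense (T.domain : Set H)) (hD : T.adjoint.domain = T.domain)
    {l : ℂ} (hl : α < |l.im|) :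
    Function.Bijective (fun ξ : T.domain => T ξ - l • (ξ : H)) ∧
      ∃ C : ℝ, 0 ≤ C ∧ ∀ ξ : T.domain, ‖(ξ : H)‖ ≤ C * ‖T ξ - l • (ξ : H)‖ := by
  set fl : T.domain →ₗ[ℂ] H := T.toFun - l • T.domain.subtype with hfldef
  have hfl : ∀ ξ : T.domain, fl ξ = (T ξ : H) - l • (ξ : H) := fun ξ => rfl
  have hc : 0 < |l.im| - α := by linarith
  have hlow : ∀ ξ : T.domain, (|l.im| - α) * ‖(ξ : H)‖ ≤ ‖fl ξ‖ := by
    intro ξ; rw [hfl]; exact lower_bound hα hW l ξ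
  have hinj : Function.Injective fl := by
    intro a b hab
    have h0 : fl (a - b) = 0 := by rw [map_sub, hab, sub_self]
    have := hlow (a - b)
    rw [h0, norm_zero] at this
    have hnorm : ‖((a - b : T.domain) : H)‖ = 0 := by nlinarith [norm_nonneg ((a - b : T.domain) : H)]
    have : ((a : H) - b) = 0 := by rwa [← Submodule.coe_sub, ← norm_eq_zero]
    exact Subtype.ext (by rwa [sub_eq_zero] at this)
  -- the adjoint restricted to the domain of `T`
  have hle : T.domain ≤ T.adjoint.domain := hD.ge
  set incl : T.domain →ₗ[ℂ] T.adjoint.domain := Submodule.inclusion hle with hincl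
  set A : T.domain →ₗ[ℂ] H := T.adjoint.toFun.comp incl with hAdef
  have hA : ∀ ξ : T.domain, A ξ = T.adjoint (incl ξ) := fun ξ => rfl
  have hAsub : ∀ ξ : T.domain, ‖(T ξ : H) - A ξ‖ ≤ 2 * α * ‖(ξ : H)‖ := by
    intro ξ
    exact norm_sub_adjoint_le hα hW hdense ξ (incl ξ) rfl
  have hAinner : ∀ (ξ ζ : T.domain), ⟪(ξ : H), T ζ⟫_ℂ = ⟪A ξ, (ζ : H)⟫_ℂ := by
    intro ξ ζ
    rw [hA]
    exact (LinearPMap.adjoint_isFormalAdjoint hdense (incl ξ) ζ).symm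
  have hsurj : Function.Surjective fl := by
    set M := LinearMap.range fl with hM
    have hclosed : IsClosed (M : Set H) := by
      apply IsSeqClosed.isClosed
      intro u y hu huy
      have hmem : ∀ n, ∃ ξ : T.domain, fl ξ = u n := fun n => hu n
      choose ξ hξ using hmem
      have hcu : CauchySeq u := huy.cauchySeq
      have hvdiff : ∀ i j, (|l.im| - α) * ‖(ξ i : H) - (ξ j : H)‖ ≤ ‖u i - u j‖ := by
        intro i j
        have h1 := hlow (ξ i - ξ j)
        rw [map_sub, hξ i, hξ j] at h1
        rwa [AddSubgroupClass.coe_sub] at h1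
      have hcv : CauchySeq (fun n => (ξ n : H)) := cauchySeq_of_bound hc hvdiff hcu
      obtain ⟨x, hx⟩ := cauchySeq_tendsto_of_complete hcv
      set w : ℕ → H := fun n => (T (ξ n) : H) - A (ξ n) with hw
      have hwb : ∀ i j, ‖w i - w j‖ ≤ (2 * α + 1) * ‖(ξ i : H) - (ξ j : H)‖ := by
        intro i j
        have h1 : w i - w j = (T (ξ i - ξ j) : H) - A (ξ i - ξ j) := by
          rw [hw]
          simp only [LinearPMap.map_sub, map_sub]
          abel
        rw [h1]
        have h2 := hAsub (ξ i - ξ j)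
        have h3 : ‖((ξ i - ξ j : T.domain) : H)‖ = ‖(ξ i : H) - (ξ j : H)‖ := by
          simp
        rw [h3] at h2
        nlinarith [norm_nonneg ((ξ i : H) - (ξ j : H))]
      have hcw : CauchySeq w := by
        refine cauchySeq_of_bound (c := 1) one_pos (u := fun n => ((2 * α + 1) : ℝ) • (ξ n : H)) ?_ ((hx.const_smul ((2 * α + 1) : ℝ)).cauchySeq)
        intro i j
        rw [one_mul, ← smul_sub, norm_smul, Real.norm_eq_abs, _root_.abs_of_pos (by linarith : (0:ℝ) < 2 * α + 1)]
        exact hwb i j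
      obtain ⟨winf, hwlim⟩ := cauchySeq_tendsto_of_complete hcw
      have hTlim : Filter.Tendsto (fun n => (T (ξ n) : H)) Filter.atTop (nhds (y + l • x)) := by
        have heq : ∀ n, (T (ξ n) : H) = u n + l • (ξ n : H) := by
          intro n
          have h0 : (T (ξ n) : H) - l • ((ξ n : T.domain) : H) = u n := (hfl (ξ n)).symm.trans (hξ n)
          rw [← h0]; abel
        rw [show (fun n => (T (ξ n) : H)) = fun n => u n + l • (ξ n : H) from funext heq]
        exact huy.add (hx.const_smul l)
      have hAlim : Filter.Tendsto (fun n => A (ξ n)) Filter.atTop (nhds (y + l • x - winf)) := by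
        have heq : ∀ n, A (ξ n) = (T (ξ n) : H) - w n := fun n => (sub_sub_cancel _ _).symm
        rw [show (fun n => A (ξ n)) = fun n => (T (ξ n) : H) - w n from funext heq]
        exact hTlim.sub hwlim
      set z := y + l • x - winf with hz
      have hzinner : ∀ ζ : T.domain, ⟪z, (ζ : H)⟫_ℂ = ⟪x, T ζ⟫_ℂ := by
        intro ζ
        have lim1 : Filter.Tendsto (fun n => ⟪(ξ n : H), T ζ⟫_ℂ) Filter.atTop (nhds ⟪x, T ζ⟫_ℂ) :=
          Filter.Tendsto.inner hx tendsto_const_nhds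
        have lim2 : Filter.Tendsto (fun n => ⟪A (ξ n), (ζ : H)⟫_ℂ) Filter.atTop (nhds ⟪z, (ζ : H)⟫_ℂ) :=
          Filter.Tendsto.inner hAlim tendsto_const_nhds
        have heq : (fun n => ⟪(ξ n : H), T ζ⟫_ℂ) = fun n => ⟪A (ξ n), (ζ : H)⟫_ℂ :=
          funext fun n => hAinner (ξ n) ζ
        rw [heq] at lim1
        exact (tendsto_nhds_unique lim2 lim1)
      have hxmem : x ∈ T.adjoint.domain :=
        LinearPMap.mem_adjoint_domain_of_exists x ⟨z, fun ζ => hzinner ζ⟩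
      have hxdom : x ∈ T.domain := hD ▸ hxmem
      set ξI : T.domain := ⟨x, hxdom⟩ with hξI
      have hTadj : T.adjoint ⟨x, hxmem⟩ = z :=
        LinearPMap.adjoint_apply_eq hdense ⟨x, hxmem⟩ fun ζ => hzinner ζ
      have hAξI : A ξI = z := by
        have hinceq : incl ξI = ⟨x, hxmem⟩ := Subtype.ext rfl
        rw [hA, hinceq, hTadj]
      have hwlim2 : Filter.Tendsto w Filter.atTop (nhds ((T ξI : H) - A ξI)) := by
        rw [← tendsto_sub_nhds_zero_iff]
        apply squeeze_zero_norm (a := fun n => 2 * α * ‖(ξ n : H) - x‖)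
        · intro n
          have h1 : w n - ((T ξI : H) - A ξI) = (T (ξ n - ξI) : H) - A (ξ n - ξI) := by
            rw [hw]
            simp only [LinearPMap.map_sub, map_sub]
            abel
          rw [h1]
          have h2 := hAsub (ξ n - ξI)
          have h3 : ‖((ξ n - ξI : T.domain) : H)‖ = ‖(ξ n : H) - x‖ := by
            rw [AddSubgroupClass.coe_sub]
          rwa [h3] at h2
        · have : Filter.Tendsto (fun n => (ξ n : H) - x) Filter.atTop (nhds 0) :=
            tendsto_sub_nhds_zero_iff.mpr hx
          simpa using this.norm.const_mul (2 * α)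
      have hweq : winf = (T ξI : H) - A ξI := tendsto_nhds_unique hwlim hwlim2
      have hTfin : (T ξI : H) = y + l • x := by
        have h4 : (T ξI : H) = winf + A ξI := by rw [hweq]; abel
        rw [h4, hAξI, hz]
        abel
      show y ∈ M
      rw [hM, LinearMap.mem_range]
      refine ⟨ξI, ?_⟩
      rw [hfl, hTfin]
      show y + l • x - l • (ξI : H) = y
      show y + l • x - l • x = y
      abel
    have hMcomplete : CompleteSpace M := hclosed.completeSpace_coe
    have horth : Mᗮ = ⊥ := by
      rw [Submodule.eq_bot_iff]
      intro v hv
      have hvT : ∀ ζ : T.domain, ⟪fl ζ, v⟫_ℂ = 0 := by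
        intro ζ
        exact (Submodule.mem_orthogonal M v).mp hv (fl ζ) (LinearMap.mem_range_self fl ζ)
      have hrel : ∀ ζ : T.domain, ⟪(starRingEnd ℂ) l • v, (ζ : H)⟫_ℂ = ⟪v, T ζ⟫_ℂ := by
        intro ζ
        have h1 := hvT ζ
        rw [hfl, inner_sub_left, inner_smul_left, sub_eq_zero] at h1
        calc ⟪(starRingEnd ℂ) l • v, (ζ : H)⟫_ℂ = l * ⟪v, (ζ : H)⟫_ℂ := by
              rw [inner_smul_left, Complex.conj_conj]
          _ = (starRingEnd ℂ) ((starRingEnd ℂ) l * ⟪(ζ : H), v⟫_ℂ) := by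
              rw [map_mul, Complex.conj_conj, inner_conj_symm]
          _ = (starRingEnd ℂ) ⟪(T ζ : H), v⟫_ℂ := by rw [h1]
          _ = ⟪v, (T ζ : H)⟫_ℂ := inner_conj_symm _ _
      have hvmem : v ∈ T.adjoint.domain :=
        LinearPMap.mem_adjoint_domain_of_exists v ⟨(starRingEnd ℂ) l • v, fun ζ => hrel ζ⟩
      have hvdom : v ∈ T.domain := hD ▸ hvmem
      set ζv : T.domain := ⟨v, hvdom⟩ with hζv
      have hval : ⟪v, T ζv⟫_ℂ = l * ((‖v‖ : ℂ) ^ 2) := by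
        rw [← hrel ζv, inner_smul_left, Complex.conj_conj]
        congr 1
        show ⟪v, v⟫_ℂ = _
        rw [inner_self_eq_norm_sq_to_K]
        norm_cast
      have him2 := im_le hα hW ζv
      have hcoev : ((ζv : T.domain) : H) = v := rfl
      rw [hcoev, hval] at him2
      have him3 : (l * ((‖v‖ : ℂ) ^ 2)).im = l.im * ‖v‖ ^ 2 := by
        simp [Complex.mul_im, pow_two]
      rw [him3, abs_mul, _root_.abs_of_nonneg (by positivity : (0:ℝ) ≤ ‖v‖ ^ 2)] at him2
      have h5 : ‖v‖ ^ 2 ≤ 0 := by nlinarith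
      have h6 : ‖v‖ ^ 2 = 0 := le_antisymm h5 (sq_nonneg _)
      rw [pow_two, mul_self_eq_zero] at h6
      exact norm_eq_zero.mp h6
    have hMtop : M = ⊤ := Submodule.orthogonal_eq_bot_iff.mp horth
    intro y
    have : y ∈ M := hMtop ▸ Submodule.mem_top
    exact this
  constructor
  · exact ⟨hinj, hsurj⟩
  · refine ⟨(|l.im| - α)⁻¹, inv_nonneg.mpr hc.le, fun ξ => ?_⟩
    have h1 := lower_bound hα hW l ξ
    calc ‖(ξ : H)‖ = (|l.im| - α)⁻¹ * ((|l.im| - α) * ‖(ξ : H)‖) := by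
          rw [← mul_assoc, inv_mul_cancel₀ hc.ne', one_mul]
      _ ≤ (|l.im| - α)⁻¹ * ‖(T ξ : H) - l • (ξ : H)‖ :=
          mul_le_mul_of_nonneg_left h1 (inv_nonneg.mpr hc.le)

set_option maxHeartbeats 1000000 in
theorem backward (hα : 0 ≤ α) (hW : numRange T ⊆ {z : ℂ | |z.im| ≤ α})
    (hdense : Dense (T.domain : Set H))
    (hres : ∀ l : ℂ, α < |l.im| →
        Function.Bijective (fun ξ : T.domain => T ξ - l • (ξ : H)) ∧
        ∃ C : ℝ, 0 ≤ C ∧ ∀ ξ : T.domain, ‖(ξ : H)‖ ≤ C * ‖T ξ - l • (ξ : H)‖) :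
    T.adjoint.domain = T.domain := by
  have hle : T.domain ≤ T.adjoint.domain := fun x hx => mem_adjoint_of_mem hα hW ⟨x, hx⟩
  set incl : T.domain →ₗ[ℂ] T.adjoint.domain := Submodule.inclusion hle with hincl
  set A : T.domain →ₗ[ℂ] H := T.adjoint.toFun.comp incl with hAdef
  have hA : ∀ ξ : T.domain, A ξ = T.adjoint (incl ξ) := fun ξ => rfl
  have hAinner : ∀ (ξ ζ : T.domain), ⟪(ξ : H), T ζ⟫_ℂ = ⟪A ξ, (ζ : H)⟫_ℂ := fun ξ ζ =>
    (LinearPMap.adjoint_isFormalAdjoint hdense (incl ξ) ζ).symm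
  have hDinner : ∀ ζ ξ : T.domain, ⟪(ζ : H), (T ξ : H) - A ξ⟫_ℂ = nf T ζ ξ := fun ζ ξ =>
    inner_sub_adjoint hdense ξ (incl ξ) rfl ζ
  set K0 : T.domain →ₗ[ℂ] H := (2⁻¹ : ℂ) • (T.toFun - A) with hK0def
  have hK0 : ∀ ξ : T.domain, K0 ξ = (2⁻¹ : ℂ) • ((T ξ : H) - A ξ) := fun ξ => rfl
  have hK0b : ∀ ξ : T.domain, ‖K0 ξ‖ ≤ α * ‖ξ‖ := by
    intro ξ
    rw [hK0, norm_smul]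
    have h1 := norm_sub_adjoint_le hα hW hdense ξ (incl ξ) rfl
    rw [← hA ξ] at h1
    have h2 : ‖(2⁻¹ : ℂ)‖ = 2⁻¹ := by norm_num
    rw [h2]
    have h3 : ‖ξ‖ = ‖(ξ : H)‖ := rfl
    rw [h3]
    nlinarith [norm_nonneg ((T ξ : H) - A ξ)]
  set Kc : T.domain →L[ℂ] H := LinearMap.mkContinuous K0 α hK0b with hKcdef
  set Kh : H →L[ℂ] H := Kc.extend (Submodule.subtypeL T.domain)
    with hKhdef
  have hKh : ∀ ξ : T.domain, Kh (ξ : H) = K0 ξ := fun ξ =>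
    ContinuousLinearMap.extend_eq (f := Kc) (e := Submodule.subtypeL T.domain)
      hdense.denseRange_val isUniformEmbedding_subtype_val.isUniformInducing ξ
  have hKhb : ∀ x : H, ‖Kh x‖ ≤ α * ‖x‖ := by
    have hcl : IsClosed {x : H | ‖Kh x‖ ≤ α * ‖x‖} :=
      isClosed_le (Kh.continuous.norm) (continuous_const.mul continuous_norm)
    intro x
    have hsub : (T.domain : Set H) ⊆ {x : H | ‖Kh x‖ ≤ α * ‖x‖} := by
      intro y hy
      have h1 := hK0b ⟨y, hy⟩
      rw [← hKh ⟨y, hy⟩] at h1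
      exact h1
    exact closure_minimal hsub hcl (hdense x)
  have hKinner : ∀ (ζ ξ : T.domain), ⟪(ζ : H), Kh (ξ : H)⟫_ℂ = (2⁻¹ : ℂ) * nf T ζ ξ := by
    intro ζ ξ
    rw [hKh, hK0, inner_smul_right, hDinner]
  have hKanti : ∀ (x : H) (ζ : T.domain), ⟪x, Kh (ζ : H)⟫_ℂ = -⟪Kh x, (ζ : H)⟫_ℂ := by
    intro x ζ
    have heq : (fun x : H => ⟪x, Kh (ζ : H)⟫_ℂ + ⟪Kh x, (ζ : H)⟫_ℂ) = fun _ => (0 : ℂ) := by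
      refine Continuous.ext_on hdense ?_ continuous_const ?_
      · exact ((continuous_id.inner continuous_const)).add
          ((Kh.continuous).inner continuous_const)
      · intro y hy
        set ξy : T.domain := ⟨y, hy⟩ with hξy
        have e1 : ⟪y, Kh (ζ : H)⟫_ℂ = (2⁻¹ : ℂ) * nf T ξy ζ := hKinner ξy ζ
        have e2 : ⟪Kh y, (ζ : H)⟫_ℂ = -((2⁻¹ : ℂ) * nf T ξy ζ) := by
          have h1 : Kh y = K0 ξy := hKh ξy
          rw [h1, hK0, inner_smul_left]
          have h2 : ⟪(T ξy : H) - A ξy, (ζ : H)⟫_ℂ = (starRingEnd ℂ) (nf T ζ ξy) := by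
            rw [← inner_conj_symm, hDinner]
          rw [h2, nf_conj]
          have h9 : (starRingEnd ℂ) (2⁻¹ : ℂ) = (2⁻¹ : ℂ) := by simp [Complex.ext_iff]
          rw [h9]
          ring
        show ⟪y, Kh (ζ : H)⟫_ℂ + ⟪Kh y, (ζ : H)⟫_ℂ = 0
        rw [e1, e2]; ring
    have := congrFun heq x
    linear_combination this
  -- bounded inverses
  have hinv : ∀ μ : ℂ, α < |μ.im| → ∃ R : H →ₗ[ℂ] T.domain,
      (∀ y, (T (R y) : H) - μ • ((R y : T.domain) : H) = y) ∧
      (∀ y, ‖((R y : T.domain) : H)‖ ≤ (|μ.im| - α)⁻¹ * ‖y‖) := by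
    intro μ hμ
    set flμ : T.domain →ₗ[ℂ] H := T.toFun - μ • T.domain.subtype with hflμ
    have hfleq : ∀ ξ : T.domain, flμ ξ = (T ξ : H) - μ • (ξ : H) := fun ξ => rfl
    have hb : Function.Bijective flμ := (hres μ hμ).1
    set e := LinearEquiv.ofBijective flμ hb with he
    have hcμ : 0 < |μ.im| - α := by linarith
    refine ⟨e.symm.toLinearMap, fun y => ?_, fun y => ?_⟩
    · have h1 : flμ (e.symm y) = y := e.apply_symm_apply y
      rw [← hfleq]
      exact h1
    · have h1 := lower_bound hα hW μ (e.symm y)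
      have h2 : flμ (e.symm y) = y := e.apply_symm_apply y
      rw [← hfleq (e.symm y)] at h1
      rw [h2] at h1
      show ‖((e.symm y : T.domain) : H)‖ ≤ (|μ.im| - α)⁻¹ * ‖y‖
      calc ‖((e.symm y : T.domain) : H)‖
          = (|μ.im| - α)⁻¹ * ((|μ.im| - α) * ‖((e.symm y : T.domain) : H)‖) := by
            rw [← mul_assoc, inv_mul_cancel₀ hcμ.ne', one_mul]
        _ ≤ (|μ.im| - α)⁻¹ * ‖y‖ := mul_le_mul_of_nonneg_left h1 (inv_nonneg.mpr hcμ.le)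
  -- surjectivity of S - μ
  have hSsurj : ∀ μ : ℂ, 2 * α < |μ.im| → ∀ y : H, ∃ ξ : T.domain,
      (T ξ : H) - Kh (ξ : H) - μ • (ξ : H) = y := by
    intro μ hμ y
    have hμ' : α < |μ.im| := by linarith
    have hcμ : 0 < |μ.im| - α := by linarith
    obtain ⟨R, hR1, hR2⟩ := hinv μ hμ'
    set Rc : H →L[ℂ] H :=
      (Submodule.subtypeL T.domain).comp (LinearMap.mkContinuous R ((|μ.im| - α)⁻¹) hR2)
      with hRcdef
    have hRc : ∀ z, Rc z = ((R z : T.domain) : H) := fun z => rfl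
    set G : H →L[ℂ] H := Kh.comp Rc with hGdef
    have hGnorm : ‖G‖ ≤ α * (|μ.im| - α)⁻¹ := by
      refine ContinuousLinearMap.opNorm_le_bound _ (by positivity) fun z => ?_
      have h1 : G z = Kh (Rc z) := rfl
      rw [h1]
      calc ‖Kh (Rc z)‖ ≤ α * ‖Rc z‖ := hKhb _
        _ ≤ α * ((|μ.im| - α)⁻¹ * ‖z‖) := by
            refine mul_le_mul_of_nonneg_left ?_ hα
            rw [hRc]
            exact hR2 z
        _ = α * (|μ.im| - α)⁻¹ * ‖z‖ := by ring
    have hGlt : ‖G‖ < 1 := by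
      refine lt_of_le_of_lt hGnorm ?_
      rw [← div_eq_mul_inv]
      rw [div_lt_one hcμ]
      linarith
    set u : (H →L[ℂ] H)ˣ := Units.oneSub G hGlt with hu
    set z : H := (↑u⁻¹ : H →L[ℂ] H) y with hz
    refine ⟨R z, ?_⟩
    have e1 : (T (R z) : H) - μ • ((R z : T.domain) : H) = z := hR1 z
    have e2 : Kh ((R z : T.domain) : H) = G z := rfl
    calc (T (R z) : H) - Kh ((R z : T.domain) : H) - μ • ((R z : T.domain) : H)
        = ((T (R z) : H) - μ • ((R z : T.domain) : H)) - Kh ((R z : T.domain) : H) := by abel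
      _ = z - G z := by rw [e1, e2]
      _ = (1 - G) z := by
          rw [ContinuousLinearMap.sub_apply, ContinuousLinearMap.one_apply]
      _ = (↑u : H →L[ℂ] H) z := by rw [hu, Units.val_oneSub]
      _ = ((↑u * ↑u⁻¹ : H →L[ℂ] H)) y := by rw [ContinuousLinearMap.mul_apply, hz]
      _ = y := by rw [u.mul_inv, ContinuousLinearMap.one_apply]
  -- the symmetric identity for S
  have hSsym : ∀ ξ ζ : T.domain,
      ⟪(ξ : H), (T ζ : H) - Kh (ζ : H)⟫_ℂ = ⟪(T ξ : H) - Kh (ξ : H), (ζ : H)⟫_ℂ := by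
    intro ξ ζ
    have e1 : ⟪(ξ : H), (T ζ : H)⟫_ℂ = ⟪(T ξ : H), (ζ : H)⟫_ℂ + nf T ξ ζ := by
      rw [nf]; ring
    have e2 : ⟪(ξ : H), Kh (ζ : H)⟫_ℂ = (2⁻¹ : ℂ) * nf T ξ ζ := hKinner ξ ζ
    have e3 : ⟪Kh (ξ : H), (ζ : H)⟫_ℂ = -((2⁻¹ : ℂ) * nf T ξ ζ) := by
      have h1 : ⟪(ζ : H), Kh (ξ : H)⟫_ℂ = (2⁻¹ : ℂ) * nf T ζ ξ := hKinner ζ ξ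
      have h2 : ⟪Kh (ξ : H), (ζ : H)⟫_ℂ = (starRingEnd ℂ) ⟪(ζ : H), Kh (ξ : H)⟫_ℂ :=
        (inner_conj_symm _ _).symm
      rw [h2, h1, map_mul, nf_conj]
      have h9 : (starRingEnd ℂ) (2⁻¹ : ℂ) = (2⁻¹ : ℂ) := by simp [Complex.ext_iff]
      rw [h9]
      ring
    rw [inner_sub_right, inner_sub_left, e1, e2, e3]
    ring
  -- main argument
  refine le_antisymm ?_ hle
  intro x hx
  set t : ℝ := 2 * α + 1 with ht
  have htpos : 0 < t := by linarith
  set lp : ℂ := (t : ℂ) * Complex.I with hlp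
  have hlpim : lp.im = t := by simp [hlp]
  have hlpconj : (starRingEnd ℂ) lp = -lp := by
    rw [hlp, map_mul, Complex.conj_I, Complex.conj_ofReal]
    ring
  have habs1 : 2 * α < |lp.im| := by rw [hlpim, abs_of_pos htpos]; linarith
  have habs2 : 2 * α < |(-lp).im| := by
    rw [Complex.neg_im, hlpim, abs_neg, abs_of_pos htpos]; linarith
  set η : T.adjoint.domain := ⟨x, hx⟩ with hη
  set w : H := T.adjoint η + Kh x + lp • x with hw
  obtain ⟨ξ, hξ⟩ := hSsurj (-lp) habs2 w
  have hξ' : (T ξ : H) - Kh (ξ : H) + lp • (ξ : H) = w := by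
    rw [← hξ, neg_smul, sub_neg_eq_add]
  have hperp : ∀ y : H, ⟪x - (ξ : H), y⟫_ℂ = 0 := by
    intro y
    obtain ⟨ζ, hζ⟩ := hSsurj lp habs1 y
    rw [← hζ, inner_sub_left, sub_eq_zero]
    have hx_side : ⟪x, (T ζ : H) - Kh (ζ : H) - lp • (ζ : H)⟫_ℂ = ⟪w, (ζ : H)⟫_ℂ := by
      rw [inner_sub_right, inner_sub_right, inner_smul_right]
      have e1 : ⟪x, (T ζ : H)⟫_ℂ = ⟪T.adjoint η, (ζ : H)⟫_ℂ :=
        (LinearPMap.adjoint_isFormalAdjoint hdense η ζ).symm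
      have e2 : ⟪x, Kh (ζ : H)⟫_ℂ = -⟪Kh x, (ζ : H)⟫_ℂ := hKanti x ζ
      rw [e1, e2, hw]
      rw [inner_add_left, inner_add_left, inner_smul_left, hlpconj]
      ring
    have hξ_side : ⟪(ξ : H), (T ζ : H) - Kh (ζ : H) - lp • (ζ : H)⟫_ℂ = ⟪w, (ζ : H)⟫_ℂ := by
      have s1 : ⟪(ξ : H), (T ζ : H) - Kh (ζ : H) - lp • (ζ : H)⟫_ℂ
          = ⟪(ξ : H), (T ζ : H) - Kh (ζ : H)⟫_ℂ - ⟪(ξ : H), lp • (ζ : H)⟫_ℂ :=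
        inner_sub_right _ _ _
      rw [s1, hSsym ξ ζ, inner_smul_right, ← hξ']
      rw [inner_add_left, inner_sub_left, inner_smul_left, hlpconj]
      ring
    rw [hx_side, hξ_side]
  have hzero : x - (ξ : H) = 0 := by
    have := hperp (x - (ξ : H))
    rwa [inner_self_eq_zero] at this
  rw [sub_eq_zero] at hzero
  rw [hzero]
  exact ξ.2

end StripAux

/-- for a densely defined `T` with numerical range in the closed strip
`{λ : |Im λ| ≤ α}`, one has `D(T) = D(T*)` if and only if every `λ` with `|Im λ| > α`
belongs to the resolvent set of `T` (i.e. `T - λ` is bijective with bounded inverse). -/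
theorem domain_eq_adjoint_domain_iff_resolvent {H : Type*} [NormedAddCommGroup H]
    [InnerProductSpace ℂ H] [CompleteSpace H] (α : ℝ) (hα : 0 ≤ α)
    (T : H →ₗ.[ℂ] H) (hdense : Dense (T.domain : Set H))
    (hW : numRange T ⊆ {z : ℂ | |z.im| ≤ α}) :
    T.adjoint.domain = T.domain ↔
      ∀ l : ℂ, α < |l.im| →
        Function.Bijective (fun ξ : T.domain => T ξ - l • (ξ : H)) ∧
        ∃ C : ℝ, 0 ≤ C ∧ ∀ ξ : T.domain, ‖(ξ : H)‖ ≤ C * ‖T ξ - l • (ξ : H)‖ := by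
  constructor
  · intro hD l hl
    exact StripAux.forward hα hW hdense hD hl
  · intro hres
    exact StripAux.backward hα hW hdense hres
end

section
/- Let K ∈ B(H) and θ ∈ (0, π/2). Then ‖sin(θ) Kη ± i cos(θ) η‖ ≤ ‖η‖ for all η ∈ H (both signs) if and only if ⟨(I + K)η, (I − K)η⟩ lies in the sector {λ ∈ ℂ : |arg λ| ≤ θ} ∪ {0} for all η ∈ H, i.e., |Im⟨(I+K)η,(I−K)η⟩| ≤ tan(θ) · Re⟨(I+K)η,(I−K)η⟩ for all η ∈ H. -/
open scoped InnerProductSpace ComplexInnerProductSpace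

private theorem inner_expand {H : Type*} [NormedAddCommGroup H] [InnerProductSpace ℂ H]
    (K : H →L[ℂ] H) (η : H) :
    ⟪η - K η, η + K η⟫_ℂ = ((‖η‖^2 - ‖K η‖^2 : ℝ) : ℂ)
      + ((2 * (⟪η, K η⟫_ℂ).im : ℝ) : ℂ) * Complex.I := by
  have h1 : (⟪K η, η⟫_ℂ).re = (⟪η, K η⟫_ℂ).re := by
    rw [← inner_conj_symm (K η) η, Complex.conj_re]
  have h2 : (⟪K η, η⟫_ℂ).im = -(⟪η, K η⟫_ℂ).im := by
    rw [← inner_conj_symm (K η) η, Complex.conj_im]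
  rw [inner_sub_left, inner_add_right, inner_add_right,
    inner_self_eq_norm_sq_to_K, inner_self_eq_norm_sq_to_K]
  apply Complex.ext <;> simp [h1, h2] <;> ring

private theorem norm_sq_add {H : Type*} [NormedAddCommGroup H] [InnerProductSpace ℂ H]
    (K : H →L[ℂ] H) (s c : ℝ) (η : H) :
    ‖(s : ℂ) • K η + (Complex.I * c) • η‖^2
      = s^2 * ‖K η‖^2 + c^2 * ‖η‖^2 + 2*s*c*(⟪η, K η⟫_ℂ).im := by
  have h2 : (⟪K η, η⟫_ℂ).im = -(⟪η, K η⟫_ℂ).im := by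
    rw [← inner_conj_symm (K η) η, Complex.conj_im]
  rw [@norm_add_sq ℂ, inner_smul_left, inner_smul_right, norm_smul, norm_smul]
  simp [Complex.mul_re, Complex.mul_im, h2, mul_pow, sq_abs, Complex.norm_def,
    Complex.normSq_apply]
  ring

private theorem norm_sq_sub {H : Type*} [NormedAddCommGroup H] [InnerProductSpace ℂ H]
    (K : H →L[ℂ] H) (s c : ℝ) (η : H) :
    ‖(s : ℂ) • K η - (Complex.I * c) • η‖^2
      = s^2 * ‖K η‖^2 + c^2 * ‖η‖^2 - 2*s*c*(⟪η, K η⟫_ℂ).im := by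
  have h2 : (⟪K η, η⟫_ℂ).im = -(⟪η, K η⟫_ℂ).im := by
    rw [← inner_conj_symm (K η) η, Complex.conj_im]
  rw [@norm_sub_sq ℂ, inner_smul_left, inner_smul_right, norm_smul, norm_smul]
  simp [Complex.mul_re, Complex.mul_im, h2, mul_pow, sq_abs, Complex.norm_def,
    Complex.normSq_apply]
  ring

/-- for `K ∈ B(H)` and `θ ∈ (0, π/2)`,
`‖sin θ · Kη ± i cos θ · η‖ ≤ ‖η‖` for all `η` (both signs) if and only if
`|Im ⟨(I + K)η, (I - K)η⟩| ≤ tan θ · Re ⟨(I + K)η, (I - K)η⟩` for all `η`. -/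
theorem sector_condition_iff {H : Type*} [NormedAddCommGroup H]
    [InnerProductSpace ℂ H] [CompleteSpace H]
    (K : H →L[ℂ] H) (θ : ℝ) (hθ₀ : 0 < θ) (hθ₁ : θ < Real.pi / 2) :
    ((∀ η : H, ‖(Real.sin θ : ℂ) • K η + (Complex.I * Real.cos θ) • η‖ ≤ ‖η‖) ∧
     (∀ η : H, ‖(Real.sin θ : ℂ) • K η - (Complex.I * Real.cos θ) • η‖ ≤ ‖η‖)) ↔
    (∀ η : H, |(⟪η - K η, η + K η⟫_ℂ).im| ≤ Real.tan θ * (⟪η - K η, η + K η⟫_ℂ).re) := by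
  have hs : 0 < Real.sin θ := Real.sin_pos_of_pos_of_lt_pi hθ₀ (by linarith [Real.pi_pos])
  have hc : 0 < Real.cos θ := Real.cos_pos_of_mem_Ioo ⟨by linarith [Real.pi_pos], hθ₁⟩
  have hsc : Real.sin θ ^ 2 + Real.cos θ ^ 2 = 1 := Real.sin_sq_add_cos_sq θ
  have htan : Real.tan θ = Real.sin θ / Real.cos θ := Real.tan_eq_sin_div_cos θ
  set s := Real.sin θ
  set c := Real.cos θ
  have key : ∀ η : H,
      ((‖(s : ℂ) • K η + (Complex.I * c) • η‖ ≤ ‖η‖ ∧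
        ‖(s : ℂ) • K η - (Complex.I * c) • η‖ ≤ ‖η‖) ↔
       |(⟪η - K η, η + K η⟫_ℂ).im| ≤ Real.tan θ * (⟪η - K η, η + K η⟫_ℂ).re) := by
    intro η
    have hre : (⟪η - K η, η + K η⟫_ℂ).re = ‖η‖^2 - ‖K η‖^2 := by
      rw [inner_expand]; simp [← Complex.ofReal_pow]
    have him : (⟪η - K η, η + K η⟫_ℂ).im = 2 * (⟪η, K η⟫_ℂ).im := by
      rw [inner_expand]; simp [← Complex.ofReal_pow]
    have h1 : ‖(s : ℂ) • K η + (Complex.I * c) • η‖ ≤ ‖η‖ ↔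
        ‖(s : ℂ) • K η + (Complex.I * c) • η‖^2 ≤ ‖η‖^2 :=
      (pow_le_pow_iff_left₀ (norm_nonneg _) (norm_nonneg _) two_ne_zero).symm
    have h2 : ‖(s : ℂ) • K η - (Complex.I * c) • η‖ ≤ ‖η‖ ↔
        ‖(s : ℂ) • K η - (Complex.I * c) • η‖^2 ≤ ‖η‖^2 :=
      (pow_le_pow_iff_left₀ (norm_nonneg _) (norm_nonneg _) two_ne_zero).symm
    rw [h1, h2, norm_sq_add, norm_sq_sub, hre, him, htan, abs_le]
    set T := (⟪η, K η⟫_ℂ).im with hT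
    set X := ‖η‖^2 with hXdef
    set Y := ‖K η‖^2 with hYdef
    have hX : s^2*X + c^2*X = X := by linear_combination X * hsc
    have hsc' : 0 < s * c := mul_pos hs hc
    constructor
    · rintro ⟨ha, hb⟩
      constructor
      · have h0 : 0 ≤ s^2*(X - Y) + 2*s*c*T := by nlinarith [hX]
        have h0' : 0 ≤ (s^2*(X - Y) + 2*s*c*T) / (s*c) := div_nonneg h0 hsc'.le
        have heq : (s^2*(X - Y) + 2*s*c*T) / (s*c) = s / c * (X - Y) + 2*T := by
          field_simp
        linarith [heq ▸ h0']
      · have h0 : 0 ≤ s^2*(X - Y) - 2*s*c*T := by nlinarith [hX]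
        have h0' : 0 ≤ (s^2*(X - Y) - 2*s*c*T) / (s*c) := div_nonneg h0 hsc'.le
        have heq : (s^2*(X - Y) - 2*s*c*T) / (s*c) = s / c * (X - Y) - 2*T := by
          field_simp
        linarith [heq ▸ h0']
    · rintro ⟨ha, hb⟩
      have ha2 := mul_le_mul_of_nonneg_right ha hc.le
      have hb2 := mul_le_mul_of_nonneg_right hb hc.le
      have hca : s / c * (X - Y) * c = s * (X - Y) := by field_simp
      rw [hca] at hb2
      have hca2 : -(s / c * (X - Y)) * c = -(s * (X - Y)) := by field_simp
      rw [hca2] at ha2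
      have ha3 : -(2*T) * c ≤ s * (X - Y) := by linarith
      have hb3 := mul_le_mul_of_nonneg_left hb2 hs.le
      have ha4 := mul_le_mul_of_nonneg_left ha3 hs.le
      constructor
      · linarith [hX, hb3]
      · linarith [hX, ha4]
  constructor
  · rintro ⟨hp, hm⟩ η
    exact (key η).mp ⟨hp η, hm η⟩
  · intro h
    exact ⟨fun η => ((key η).mpr (h η)).1, fun η => ((key η).mpr (h η)).2⟩
end

section
/- Let T be the operator on ℂ² with domain D(T) = {(x, 0) : x ∈ ℂ} defined by T(x, 0) = (0, x). Then T has numerical range {0} ⊆ [0, ∞), T is closed, not densely defined, R(T − λI) ≠ ℂ² for every λ ∉ [0, ∞), and T is maximal positive: T has no proper extension with numerical range contained in [0, ∞). -/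
open scoped InnerProductSpace ComplexInnerProductSpace

/-- the operator `T(x, 0) = (0, x)` on `ℂ²` with domain `{(x, 0) : x ∈ ℂ}`
has numerical range `{0}`, is closed, not densely defined, `R(T - λI) ≠ ℂ²` for every
`λ ∉ [0, ∞)`, and is maximal positive. -/
theorem counterexample_maximal_positive
    (T : EuclideanSpace ℂ (Fin 2) →ₗ.[ℂ] EuclideanSpace ℂ (Fin 2))
    (hdom : (T.domain : Set (EuclideanSpace ℂ (Fin 2))) = {ξ | ξ 1 = 0})
    (hact : ∀ ξ : T.domain, T ξ = ![(0 : ℂ), (ξ : EuclideanSpace ℂ (Fin 2)) 0]) :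
    numRange T = {0} ∧
    T.IsClosed ∧
    ¬ Dense (T.domain : Set (EuclideanSpace ℂ (Fin 2))) ∧
    (∀ l : ℂ, ¬ (l.im = 0 ∧ 0 ≤ l.re) →
      ∃ η : EuclideanSpace ℂ (Fin 2),
        ∀ ξ : T.domain, T ξ - l • (ξ : EuclideanSpace ℂ (Fin 2)) ≠ η) ∧
    (∀ T' : EuclideanSpace ℂ (Fin 2) →ₗ.[ℂ] EuclideanSpace ℂ (Fin 2),
      T ≤ T' → numRange T' ⊆ {z : ℂ | z.im = 0 ∧ 0 ≤ z.re} → T' = T) := by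
  have hmem : ∀ ξ : T.domain, (ξ : EuclideanSpace ℂ (Fin 2)) 1 = 0 := by
    intro ξ
    have : (ξ : EuclideanSpace ℂ (Fin 2)) ∈ (T.domain : Set (EuclideanSpace ℂ (Fin 2))) := ξ.2
    rw [hdom] at this
    exact this
  have h10 : (!₂[1, 0] : EuclideanSpace ℂ (Fin 2)) ∈ T.domain := by
    have : (!₂[1, 0] : EuclideanSpace ℂ (Fin 2)) ∈ (T.domain : Set (EuclideanSpace ℂ (Fin 2))) := by
      rw [hdom]; exact rfl
    exact this
  refine ⟨?_, ?_, ?_, ?_, ?_⟩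
  · -- numerical range = {0}
    ext z
    simp only [numRange, Set.mem_setOf_eq, Set.mem_singleton_iff]
    constructor
    · rintro ⟨ξ, -, rfl⟩
      rw [PiLp.inner_apply, hact ξ]
      simp [PiLp.inner_apply, Fin.sum_univ_two, RCLike.inner_apply, hmem ξ]
    · rintro rfl
      refine ⟨⟨!₂[1, 0], h10⟩, ?_, ?_⟩
      · rw [EuclideanSpace.norm_eq]
        simp [Fin.sum_univ_two]
      · rw [PiLp.inner_apply, hact]
        simp [PiLp.inner_apply, Fin.sum_univ_two, RCLike.inner_apply]
  · exact T.graph.closed_of_finiteDimensional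
  · -- not dense
    intro hd
    have hcl : IsClosed (T.domain : Set (EuclideanSpace ℂ (Fin 2))) :=
      T.domain.closed_of_finiteDimensional
    have : (T.domain : Set (EuclideanSpace ℂ (Fin 2))) = Set.univ := by
      rw [← hcl.closure_eq, hd.closure_eq]
    have h01 : (!₂[0, 1] : EuclideanSpace ℂ (Fin 2)) ∈ (T.domain : Set (EuclideanSpace ℂ (Fin 2))) := by
      rw [this]; trivial
    rw [hdom] at h01
    exact one_ne_zero h01
  · -- range condition
    intro l _
    refine ⟨!₂[1, 0], fun ξ h => ?_⟩
    have h0 : (T ξ - l • (ξ : EuclideanSpace ℂ (Fin 2))) 0 = (!₂[1, 0] : EuclideanSpace ℂ (Fin 2)) 0 := by rw [h]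
    have h1 : (T ξ - l • (ξ : EuclideanSpace ℂ (Fin 2))) 1 = (!₂[1, 0] : EuclideanSpace ℂ (Fin 2)) 1 := by rw [h]
    simp only [PiLp.sub_apply, PiLp.smul_apply, smul_eq_mul, WithLp.ofLp_toLp] at h0 h1
    rw [hact ξ] at h0 h1
    simp only [Matrix.cons_val_zero, Matrix.cons_val_one, Matrix.head_cons] at h0 h1
    rw [hmem ξ, mul_zero, sub_zero] at h1
    rw [h1, mul_zero, sub_zero] at h0
    exact zero_ne_one h0
  · -- maximality
    intro T' hle hnr
    -- key: quadratic form on T' is real nonneg for all ξ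
    have key : ∀ ξ : T'.domain, (⟪(ξ : EuclideanSpace ℂ (Fin 2)), T' ξ⟫_ℂ).im = 0 ∧
        0 ≤ (⟪(ξ : EuclideanSpace ℂ (Fin 2)), T' ξ⟫_ℂ).re := by
      intro ξ
      by_cases hz : (ξ : EuclideanSpace ℂ (Fin 2)) = 0
      · have : ⟪(ξ : EuclideanSpace ℂ (Fin 2)), T' ξ⟫_ℂ = 0 := by
          rw [hz]; simp
        rw [this]; simp
      · set n : ℝ := ‖(ξ : EuclideanSpace ℂ (Fin 2))‖ with hn
        have hnpos : 0 < n := norm_pos_iff.mpr hz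
        set ξ' : T'.domain := ((n⁻¹ : ℂ)) • ξ with hξ'
        have hcoe : (ξ' : EuclideanSpace ℂ (Fin 2)) = (n⁻¹ : ℂ) • (ξ : EuclideanSpace ℂ (Fin 2)) := rfl
        have hnorm : ‖(ξ' : EuclideanSpace ℂ (Fin 2))‖ = 1 := by
          rw [hcoe, norm_smul]
          simp only [Complex.norm_real, norm_inv, Complex.norm_ofNat, Real.norm_eq_abs]
          rw [abs_of_pos hnpos, ← hn, inv_mul_cancel₀ hnpos.ne']
        have hmemnr : ⟪(ξ' : EuclideanSpace ℂ (Fin 2)), T' ξ'⟫_ℂ ∈ numRange T' :=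
          ⟨ξ', hnorm, rfl⟩
        have hTξ' : T' ξ' = (n⁻¹ : ℂ) • T' ξ := by rw [hξ', T'.map_smul]
        have hval : ⟪(ξ' : EuclideanSpace ℂ (Fin 2)), T' ξ'⟫_ℂ =
            ((n⁻¹ ^ 2 : ℝ) : ℂ) * ⟪(ξ : EuclideanSpace ℂ (Fin 2)), T' ξ⟫_ℂ := by
          rw [hcoe, hTξ', inner_smul_left, inner_smul_right, map_inv₀, Complex.conj_ofReal]
          push_cast
          ring
        have := hnr hmemnr
        rw [hval] at this
        obtain ⟨him, hre⟩ := this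
        rw [Complex.im_ofReal_mul] at him
        rw [Complex.re_ofReal_mul] at hre
        have h2 : (0:ℝ) < n⁻¹ ^ 2 := by positivity
        constructor
        · exact (mul_eq_zero.mp him).resolve_left h2.ne'
        · nlinarith
    -- show T'.domain ≤ T.domain
    have hdomle : T'.domain ≤ T.domain := by
      intro v hv
      rw [← SetLike.mem_coe, hdom, Set.mem_setOf_eq]
      by_contra hb
      set ξ : T'.domain := ⟨v, hv⟩ with hξdef
      set a : ℂ := v 0 with ha
      set b : ℂ := v 1 with hb'
      set u : T'.domain := ⟨!₂[1, 0], hle.1 h10⟩ with hu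
      have hTu : T' u = ![(0:ℂ), 1] := by
        have h := hle.2 (x := ⟨!₂[1,0], h10⟩) (y := u) rfl
        rw [← h, hact]
        rfl
      set w : EuclideanSpace ℂ (Fin 2) := T' ξ with hw
      set c : ℂ := w 0 with hc
      set d : ℂ := w 1 with hd'
      have hq : ∀ s : ℂ, ⟪((s • u + ξ : T'.domain) : EuclideanSpace ℂ (Fin 2)),
          T' (s • u + ξ)⟫_ℂ =
          (starRingEnd ℂ) (s + a) * c + (starRingEnd ℂ) b * (s + d) := by
        intro s
        have hcoe : ((s • u + ξ : T'.domain) : EuclideanSpace ℂ (Fin 2)) =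
            s • (u : EuclideanSpace ℂ (Fin 2)) + v := rfl
        have hTv : T' (s • u + ξ) = s • T' u + w := by
          rw [T'.map_add, T'.map_smul, hw]
        have hu0 : (u : EuclideanSpace ℂ (Fin 2)) 0 = 1 := rfl
        have hu1 : (u : EuclideanSpace ℂ (Fin 2)) 1 = 0 := rfl
        have ht0 : (T' u) 0 = 0 := by rw [hTu]; rfl
        have ht1 : (T' u) 1 = 1 := by rw [hTu]; rfl
        rw [hcoe, hTv]
        simp only [PiLp.inner_apply, RCLike.inner_apply, Fin.sum_univ_two, PiLp.add_apply,
          PiLp.smul_apply, smul_eq_mul, hu0, hu1, ht0, ht1, Matrix.cons_val_zero,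
          Matrix.cons_val_one, Matrix.head_cons, mul_one, mul_zero, add_zero, zero_add]
        rw [ha, hb', hc, hd']; ring
      have him : ∀ s : ℂ, ((starRingEnd ℂ) (s + a) * c + (starRingEnd ℂ) b * (s + d)).im = 0 := by
        intro s
        have h := (key (s • u + ξ)).1
        rwa [hq s] at h
      have hre : ∀ s : ℂ, 0 ≤ ((starRingEnd ℂ) (s + a) * c + (starRingEnd ℂ) b * (s + d)).re := by
        intro s
        have h := (key (s • u + ξ)).2
        rwa [hq s] at h
      clear_value d c w b a u ξ
      set B : ℂ := (starRingEnd ℂ) a * c + (starRingEnd ℂ) b * d with hB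
      have hlin : ∀ s : ℂ, (starRingEnd ℂ) (s + a) * c + (starRingEnd ℂ) b * (s + d) =
          B + ((starRingEnd ℂ) s * c + (starRingEnd ℂ) b * s) := by
        intro s
        rw [hB, map_add]
        ring
      have himB : B.im = 0 := by
        have h := him 0
        rw [hlin 0] at h
        simpa using h
      have hg : ∀ s : ℂ, ((starRingEnd ℂ) s * c + (starRingEnd ℂ) b * s).im = 0 := by
        intro s
        have h := him s
        rw [hlin s, Complex.add_im, himB, zero_add] at h
        exact h
      have g1 := hg 1
      have gI := hg Complex.I
      simp only [map_one, one_mul, mul_one, Complex.add_im, Complex.mul_im,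
        Complex.conj_re, Complex.conj_im, Complex.I_re, Complex.I_im] at g1 gI
      have hcb : c = b := by
        rw [Complex.ext_iff]
        constructor <;> linarith [g1, gI]
      have hb2 : 0 < Complex.normSq b := Complex.normSq_pos.mpr hb
      set t : ℝ := (B.re + 1) / (2 * Complex.normSq b) with ht
      have hsval : (starRingEnd ℂ) (-(t:ℂ) * b) * c + (starRingEnd ℂ) b * (-(t:ℂ) * b) =
          (((-(2*t)) * Complex.normSq b : ℝ) : ℂ) := by
        rw [hcb]
        have hbb : (starRingEnd ℂ) b * b = (Complex.normSq b : ℂ) := by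
          rw [mul_comm, Complex.mul_conj]
        calc (starRingEnd ℂ) (-(t:ℂ) * b) * b + (starRingEnd ℂ) b * (-(t:ℂ) * b)
            = (-(t:ℂ) - (t:ℂ)) * ((starRingEnd ℂ) b * b) := by
              rw [map_mul, map_neg, Complex.conj_ofReal]; ring
          _ = (((-(2*t)) * Complex.normSq b : ℝ) : ℂ) := by
              rw [hbb]; push_cast; ring
      have hreB : 0 ≤ B.re := by
        have h := hre 0
        rw [hlin 0] at h
        simpa using h
      have hfin := hre (-(t:ℂ) * b)
      rw [hlin, hsval, Complex.add_re, Complex.ofReal_re] at hfin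
      have heq : (-(2*t)) * Complex.normSq b = -(B.re + 1) := by
        rw [ht]
        field_simp
      rw [heq] at hfin
      linarith
    exact (LinearPMap.eq_of_le_of_domain_eq hle (le_antisymm hle.1 hdomle)).symm
end

section
/- Let T be a densely defined operator on a complex Hilbert space whose numerical range is contained in a proper convex closed set N ⊆ ℂ, and suppose T is N-maximal. Then T is closed. -/
open scoped InnerProductSpace ComplexInnerProductSpace
open Filter Topology

/-- a densely defined `N`-maximal operator with numerical range in a closed,
convex, proper subset `N` of `ℂ` is closed. -/
theorem nMaximal_isClosed {H : Type*} [NormedAddCommGroup H]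
    [InnerProductSpace ℂ H] [CompleteSpace H]
    (N : Set ℂ) (hNne : N.Nonempty) (hNcl : IsClosed N) (hNconv : Convex ℝ N)
    (hNproper : N ≠ Set.univ)
    (T : H →ₗ.[ℂ] H) (hdense : Dense (T.domain : Set H))
    (hW : numRange T ⊆ N)
    (hmax : ∀ T' : H →ₗ.[ℂ] H, T ≤ T' → numRange T' ⊆ N → T' = T) :
    T.IsClosed := by
  obtain ⟨z₀, hz₀⟩ := (Set.ne_univ_iff_exists_notMem _).mp hNproper
  obtain ⟨f, c, hfc, hcz⟩ := geometric_hahn_banach_closed_point hNconv hNcl hz₀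
  obtain ⟨n₀, hn₀⟩ := hNne
  -- scaling computation for the inner product
  have compute : ∀ (r : ℝ) (ξ : T.domain),
      ⟪((((r : ℂ) • ξ : T.domain)) : H), T ((r : ℂ) • ξ)⟫_ℂ
        = (r ^ 2 : ℝ) • ⟪(ξ : H), T ξ⟫_ℂ := by
    intro r ξ
    rw [T.map_smul, Submodule.coe_smul, inner_smul_left, inner_smul_right, Complex.real_smul]
    push_cast [Complex.conj_ofReal]
    ring
  -- homogeneous numerical range bound
  have key : ∀ ξ : T.domain, f ⟪(ξ : H), T ξ⟫_ℂ ≤ c * ‖(ξ : H)‖ ^ 2 := by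
    intro ξ
    rcases eq_or_ne (ξ : H) 0 with h | h
    · have hξ : ξ = 0 := Subtype.ext h
      simp [hξ]
    · have hr : 0 < ‖(ξ : H)‖ := norm_pos_iff.mpr h
      set r : ℝ := ‖(ξ : H)‖ with hrdef
      have hη : ‖((((r⁻¹ : ℝ) : ℂ) • ξ : T.domain) : H)‖ = 1 := by
        rw [Submodule.coe_smul, norm_smul, Complex.norm_real, Real.norm_eq_abs,
          abs_of_pos (inv_pos.mpr hr)]
        exact inv_mul_cancel₀ hr.ne'
      have hmem : ⟪((((r⁻¹ : ℝ) : ℂ) • ξ : T.domain) : H), T (((r⁻¹ : ℝ) : ℂ) • ξ)⟫_ℂ ∈ N :=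
        hW ⟨_, hη, rfl⟩
      have hlt := hfc _ hmem
      rw [compute r⁻¹ ξ, map_smul, smul_eq_mul] at hlt
      have h2 : r⁻¹ ^ 2 * f ⟪(ξ : H), T ξ⟫_ℂ < c := hlt
      have h3 : r ^ 2 * (r⁻¹ ^ 2 * f ⟪(ξ : H), T ξ⟫_ℂ) ≤ r ^ 2 * c :=
        mul_le_mul_of_nonneg_left h2.le (sq_nonneg r)
      have h4 : r ^ 2 * (r⁻¹ ^ 2 * f ⟪(ξ : H), T ξ⟫_ℂ) = f ⟪(ξ : H), T ξ⟫_ℂ := by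
        field_simp
      rw [h4] at h3
      linarith
  set g := T.graph.topologicalClosure with hgdef
  -- sequences approximating elements of the closure of the graph
  have hseq : ∀ p : H × H, p ∈ g → ∃ ξ : ℕ → T.domain,
      Tendsto (fun n => ((ξ n : H))) atTop (𝓝 p.1) ∧
      Tendsto (fun n => T (ξ n)) atTop (𝓝 p.2) := by
    intro p hp
    have hp' : p ∈ closure (T.graph : Set (H × H)) := by
      rw [← Submodule.topologicalClosure_coe]; exact hp
    obtain ⟨u, hu, hul⟩ := mem_closure_iff_seq_limit.mp hp'
    choose ξ hξ1 hξ2 using fun n => T.mem_graph_iff.mp (hu n)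
    refine ⟨ξ, ?_, ?_⟩
    · have h1 : Tendsto (fun n => (u n).1) atTop (𝓝 p.1) := (continuous_fst.tendsto p).comp hul
      have e1 : (fun n => ((ξ n : H))) = fun n => (u n).1 := funext hξ1
      rw [e1]; exact h1
    · have h2 : Tendsto (fun n => (u n).2) atTop (𝓝 p.2) := (continuous_snd.tendsto p).comp hul
      have e2 : (fun n => T (ξ n)) = fun n => (u n).2 := funext hξ2
      rw [e2]; exact h2
  -- the closure of the graph is a graph (closability)
  have hker : ∀ x : H × H, x ∈ g → x.1 = 0 → x.2 = 0 := by
    intro x hx hx1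
    obtain ⟨ξ', h1, h2⟩ := hseq x hx
    rw [hx1] at h1
    set y := x.2 with hy
    have inner0 : ∀ u : T.domain, ⟪(u : H), y⟫_ℂ = 0 := by
      intro u
      have step1 : ∀ w : ℂ,
          f ⟪w • (u : H), y + w • T u⟫_ℂ ≤ c * ‖w • (u : H)‖ ^ 2 := by
        intro w
        have hA : Tendsto (fun n => ((ξ' n : H)) + w • (u : H)) atTop (𝓝 (w • (u : H))) := by
          simpa using h1.add (tendsto_const_nhds (x := w • (u : H)))
        have hB : Tendsto (fun n => T (ξ' n) + w • T u) atTop (𝓝 (y + w • T u)) :=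
          h2.add tendsto_const_nhds
        have hL : Tendsto (fun n => f ⟪((ξ' n : H)) + w • (u : H), T (ξ' n) + w • T u⟫_ℂ)
            atTop (𝓝 (f ⟪w • (u : H), y + w • T u⟫_ℂ)) :=
          (f.continuous.tendsto _).comp (hA.inner hB)
        have hR : Tendsto (fun n => c * ‖((ξ' n : H)) + w • (u : H)‖ ^ 2)
            atTop (𝓝 (c * ‖w • (u : H)‖ ^ 2)) := ((hA.norm.pow 2).const_mul c)
        refine le_of_tendsto_of_tendsto' hL hR fun n => ?_
        have := key (ξ' n + w • u)
        simp only [Submodule.coe_add, Submodule.coe_smul, T.map_add, T.map_smul] at this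
        exact this
      have expand : ∀ w : ℂ,
          f ((starRingEnd ℂ) w * ⟪(u : H), y⟫_ℂ) + ‖w‖ ^ 2 * f ⟪(u : H), T u⟫_ℂ
            ≤ c * (‖w‖ ^ 2 * ‖(u : H)‖ ^ 2) := by
        intro w
        have h := step1 w
        rw [inner_add_right, inner_smul_left, inner_smul_left, inner_smul_right,
          norm_smul, mul_pow] at h
        have hcw : (starRingEnd ℂ) w * (w * ⟪(u : H), T u⟫_ℂ)
            = (‖w‖ ^ 2 : ℝ) • ⟪(u : H), T u⟫_ℂ := by
          rw [← mul_assoc, RCLike.conj_mul, Complex.real_smul]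
          norm_cast
        rw [hcw, map_add, map_smul, smul_eq_mul] at h
        exact h
      by_contra ha
      set a := ⟪(u : H), y⟫_ℂ with hadef
      have step2 : ∀ v : ℂ, f ((starRingEnd ℂ) v * a) ≤ 0 := by
        intro v
        set C : ℝ := c * (‖v‖ ^ 2 * ‖(u : H)‖ ^ 2) - ‖v‖ ^ 2 * f ⟪(u : H), T u⟫_ℂ with hCdef
        have hC : Tendsto (fun t : ℝ => t * C) (𝓝[>] (0 : ℝ)) (𝓝 0) := by
          have h0 : Tendsto (fun t : ℝ => t * C) (𝓝 0) (𝓝 (0 * C)) :=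
            (continuous_id.mul continuous_const).tendsto 0
          rw [zero_mul] at h0
          exact h0.mono_left nhdsWithin_le_nhds
        refine ge_of_tendsto hC ?_
        filter_upwards [self_mem_nhdsWithin] with t ht
        have ht0 : 0 < t := ht
        have h := expand ((t : ℂ) * v)
        have e1 : (starRingEnd ℂ) ((t : ℂ) * v) * a = (t : ℝ) • ((starRingEnd ℂ) v * a) := by
          rw [map_mul, Complex.conj_ofReal, Complex.real_smul]; ring
        have e2 : ‖(t : ℂ) * v‖ ^ 2 = t ^ 2 * ‖v‖ ^ 2 := by
          rw [norm_mul, Complex.norm_real, Real.norm_eq_abs, mul_pow, sq_abs]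
        rw [e1, map_smul, smul_eq_mul, e2] at h
        nlinarith [h, ht0, sq_nonneg t]
      have hle0 : ∀ v : ℂ, f v ≤ 0 := by
        intro v
        have h1 := step2 ((starRingEnd ℂ) (v / a))
        rwa [Complex.conj_conj, div_mul_cancel₀ _ ha] at h1
      have h3 := hfc n₀ hn₀
      have h4 := hle0 z₀
      have h5 := hle0 (-n₀)
      rw [map_neg] at h5
      linarith
    have hy0 : y = 0 := by
      apply hdense.eq_zero_of_inner_left (𝕜 := ℂ)
      intro v hv
      rw [← inner_conj_symm, inner0 ⟨v, hv⟩, map_zero]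
    exact hy0
  set T' := g.toLinearPMap with hT'def
  have hgraph : T'.graph = g := Submodule.toLinearPMap_graph_eq g hker
  have hle : T ≤ T' := LinearPMap.le_of_le_graph
    (by rw [hgraph]; exact T.graph.le_topologicalClosure)
  have hWT' : numRange T' ⊆ N := by
    rintro z ⟨ξ, hξ1, rfl⟩
    have hmem : (((ξ : H)), T' ξ) ∈ g := by rw [← hgraph]; exact T'.mem_graph ξ
    obtain ⟨ξ', h1, h2⟩ := hseq _ hmem
    have hn : Tendsto (fun n => ‖((ξ' n : H))‖) atTop (𝓝 1) := by
      have := h1.norm; rwa [hξ1] at this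
    have hpos : ∀ᶠ n in atTop, 0 < ‖((ξ' n : H))‖ :=
      hn.eventually_const_lt (by norm_num)
    have hlim : Tendsto (fun n => ((‖((ξ' n : H))‖ ^ 2)⁻¹ : ℝ) • ⟪((ξ' n : H)), T (ξ' n)⟫_ℂ)
        atTop (𝓝 ⟪(ξ : H), T' ξ⟫_ℂ) := by
      have hi : Tendsto (fun n => ⟪((ξ' n : H)), T (ξ' n)⟫_ℂ) atTop (𝓝 ⟪(ξ : H), T' ξ⟫_ℂ) :=
        h1.inner h2
      have hs : Tendsto (fun n => ((‖((ξ' n : H))‖ ^ 2)⁻¹ : ℝ)) atTop (𝓝 (((1 : ℝ) ^ 2)⁻¹)) :=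
        (hn.pow 2).inv₀ (by norm_num)
      simpa using hs.smul hi
    have hev : ∀ᶠ n in atTop,
        ((‖((ξ' n : H))‖ ^ 2)⁻¹ : ℝ) • ⟪((ξ' n : H)), T (ξ' n)⟫_ℂ ∈ N := by
      filter_upwards [hpos] with n hp
      apply hW
      refine ⟨((‖((ξ' n : H))‖⁻¹ : ℝ) : ℂ) • ξ' n, ?_, ?_⟩
      · rw [Submodule.coe_smul, norm_smul, Complex.norm_real, Real.norm_eq_abs,
          abs_of_pos (inv_pos.mpr hp)]
        exact inv_mul_cancel₀ hp.ne'
      · rw [compute, inv_pow]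
    exact hNcl.mem_of_tendsto hlim hev
  have hTT' : T' = T := hmax T' hle hWT'
  have hgg : T.graph = g := by rw [← hTT']; exact hgraph
  show IsClosed (T.graph : Set (H × H))
  rw [hgg]
  exact T.graph.isClosed_topologicalClosure
end
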